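/- arXiv:2406.16879 — 2 statements merged into one kernel-verified Lean document; each statement's English description precedes it below -/
import Mathlib

section
/- For every semistandard Young tableau T of rectangular shape with k rows and m columns and entries in [n], there exists a unique multiset {S_1, ..., S_m} of m one-column tableaux (i.e., k-element subsets of [n] listed increasingly) that are pairwise noncrossing and satisfy T = S_1 ∪ ... ∪ S_m, where ∪ denotes the row-wise multiset union sorted increasingly. -/
open Finset

/-- `allLT I J` means `max I < min J` (vacuously true if either set is empty). -/
def allLT (I J : Finset ℕ) : Prop := ∀ i ∈ I, ∀ j ∈ J, i < j

/-- `I` and `J` are weakly separated. -/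
def WeaklySeparated (I J : Finset ℕ) : Prop :=
  (∃ I1 I2 : Finset ℕ, Disjoint I1 I2 ∧ I1 ∪ I2 = I \ J ∧
      allLT I1 (J \ I) ∧ allLT (J \ I) I2) ∨
  (∃ J1 J2 : Finset ℕ, Disjoint J1 J2 ∧ J1 ∪ J2 = J \ I ∧
      allLT J1 (I \ J) ∧ allLT (I \ J) J2)

/-- the set `{i_a, i_{a+1}, ..., i_b}` of entries of `I` in (1-indexed) positions `a` to `b`. -/
def posSlice (I : Finset ℕ) (a b : ℕ) : Finset ℕ :=
  I.filter fun x => a ≤ (I.filter (· ≤ x)).card ∧ (I.filter (· ≤ x)).card ≤ b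

/-- the pair of `k`-subsets `I`, `J` is noncrossing. -/
def Noncrossing (k : ℕ) (I J : Finset ℕ) : Prop :=
  ∀ a b : ℕ, 1 ≤ a → a < b → b ≤ k →
    WeaklySeparated (posSlice I a b) (posSlice J a b) ∨
    posSlice I (a + 1) (b - 1) ≠ posSlice J (a + 1) (b - 1)

/-- the `a`-th smallest entry of `I` (1-indexed). -/
def nth (I : Finset ℕ) (a : ℕ) : ℕ := (I.sort (· ≤ ·)).getD (a - 1) 0

namespace NCD

def pos (P : Finset ℕ) (x : ℕ) : ℕ := (P.filter (· ≤ x)).card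

lemma coe_sort (P : Finset ℕ) : ((P.sort (· ≤ ·) : List ℕ) : Multiset ℕ) = P.val := by
  rw [← Multiset.coe_toList P.val]; exact Quot.sound (Finset.sort_perm_toList P _)

lemma filter_card_eq_countP (P : Finset ℕ) (p : ℕ → Prop) [DecidablePred p] :
    (P.filter p).card = (P.sort (· ≤ ·)).countP (fun x => decide (p x)) := by
  rw [← Multiset.coe_countP, coe_sort]
  simp [Finset.filter, Finset.card, Multiset.countP_eq_card_filter]

/-- countP of (≤ L[i]) on a strictly sorted list. -/
lemma countP_le_getElem (L : List ℕ) (h : L.Pairwise (· < ·)) (i : ℕ) (hi : i < L.length) :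
    L.countP (fun y => decide (y ≤ L[i])) = i + 1 := by
  have hmono : ∀ a b (ha : a < L.length) (hb : b < L.length), a < b → L[a] < L[b] :=
    fun a b ha hb hab => List.pairwise_iff_getElem.mp h a b ha hb hab
  obtain ⟨v, hv⟩ : ∃ v, L[i] = v := ⟨L[i], rfl⟩
  rw [hv]
  conv_lhs => rw [← List.take_append_drop (i+1) L]
  rw [List.countP_append]
  have h1 : (L.take (i+1)).countP (fun y => decide (y ≤ v)) = (L.take (i+1)).length := by
    rw [List.countP_eq_length]
    intro a ha
    rcases List.mem_iff_getElem.mp ha with ⟨n, hn, rfl⟩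
    have hn' : n < L.length := lt_of_lt_of_le hn (by simp [List.length_take])
    have hni : n ≤ i := by
      have := hn; simp [List.length_take] at this; omega
    rw [List.getElem_take]
    simp only [decide_eq_true_eq]
    rw [← hv]
    rcases eq_or_lt_of_le hni with rfl | hlt
    · exact le_refl _
    · exact le_of_lt (hmono n i hn' hi hlt)
  have h2 : (L.drop (i+1)).countP (fun y => decide (y ≤ v)) = 0 := by
    rw [List.countP_eq_zero]
    intro a ha
    rcases List.mem_iff_getElem.mp ha with ⟨n, hn, rfl⟩
    rw [List.getElem_drop]
    simp only [decide_eq_true_eq, not_le]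
    rw [← hv]
    exact hmono i (i+1+n) hi (by simp [List.length_drop] at hn; omega) (by omega)
  rw [h1, h2, List.length_take]
  omega

lemma pos_getElem (P : Finset ℕ) (i : ℕ) (hi : i < (P.sort (· ≤ ·)).length) :
    pos P ((P.sort (· ≤ ·))[i]) = i + 1 := by
  rw [pos, filter_card_eq_countP]
  exact countP_le_getElem _ (Finset.sortedLT_sort P).pairwise i hi

lemma nth_getElem (P : Finset ℕ) (a : ℕ) (ha : 1 ≤ a) (hak : a ≤ P.card)
    (h : a - 1 < (P.sort (· ≤ ·)).length := by omega) :
    nth P a = (P.sort (· ≤ ·))[a-1] := by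
  rw [nth, List.getD_eq_getElem]

lemma nth_mem (P : Finset ℕ) (a : ℕ) (ha : 1 ≤ a) (hak : a ≤ P.card) : nth P a ∈ P := by
  have hl : a - 1 < (P.sort (· ≤ ·)).length := by rw [Finset.length_sort]; omega
  rw [nth_getElem P a ha hak hl]
  exact (Finset.mem_sort _).mp (List.getElem_mem hl)

lemma pos_nth (P : Finset ℕ) (a : ℕ) (ha : 1 ≤ a) (hak : a ≤ P.card) :
    pos P (nth P a) = a := by
  have hl : a - 1 < (P.sort (· ≤ ·)).length := by rw [Finset.length_sort]; omega
  rw [nth_getElem P a ha hak hl, pos_getElem P (a-1) hl]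
  omega

lemma nth_pos_eq (P : Finset ℕ) (x : ℕ) (hx : x ∈ P) : nth P (pos P x) = x := by
  have hx' : x ∈ P.sort (· ≤ ·) := (Finset.mem_sort _).mpr hx
  rcases List.mem_iff_getElem.mp hx' with ⟨i, hi, rfl⟩
  rw [pos_getElem P i hi, nth]
  simp only [Nat.add_sub_cancel]
  rw [List.getD_eq_getElem _ _ hi]

lemma pos_pos (P : Finset ℕ) (x : ℕ) (hx : x ∈ P) : 1 ≤ pos P x := by
  have : x ∈ P.filter (· ≤ x) := Finset.mem_filter.mpr ⟨hx, le_refl x⟩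
  have := Finset.card_pos.mpr ⟨x, this⟩
  exact this

lemma pos_le_card (P : Finset ℕ) (x : ℕ) : pos P x ≤ P.card :=
  Finset.card_le_card (Finset.filter_subset _ _)

lemma nth_lt_nth (P : Finset ℕ) (a b : ℕ) (ha : 1 ≤ a) (hab : a < b) (hb : b ≤ P.card) :
    nth P a < nth P b := by
  have hl1 : a - 1 < (P.sort (· ≤ ·)).length := by rw [Finset.length_sort]; omega
  have hl2 : b - 1 < (P.sort (· ≤ ·)).length := by rw [Finset.length_sort]; omega
  rw [nth_getElem P a ha (by omega) hl1, nth_getElem P b (by omega) hb hl2]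
  exact List.pairwise_iff_getElem.mp (Finset.sortedLT_sort P).pairwise _ _ hl1 hl2 (by omega)

lemma nth_le_nth (P : Finset ℕ) (a b : ℕ) (ha : 1 ≤ a) (hab : a ≤ b) (hb : b ≤ P.card) :
    nth P a ≤ nth P b := by
  rcases eq_or_lt_of_le hab with rfl | h
  · exact le_refl _
  · exact le_of_lt (nth_lt_nth P a b ha h hb)

lemma nth_eq_zero (P : Finset ℕ) (a : ℕ) (h : P.card < a) : nth P a = 0 := by
  rw [nth, List.getD_eq_default]
  rw [Finset.length_sort]; omega

lemma le_nth_card (P : Finset ℕ) (x : ℕ) (hx : x ∈ P) : x ≤ nth P P.card := by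
  conv_lhs => rw [← nth_pos_eq P x hx]
  exact nth_le_nth P _ _ (pos_pos P x hx) (pos_le_card P x) (le_refl _)

lemma mem_posSlice (P : Finset ℕ) (a b x : ℕ) :
    x ∈ posSlice P a b ↔ x ∈ P ∧ a ≤ pos P x ∧ pos P x ≤ b := by
  simp [posSlice, pos, Finset.mem_filter]

lemma posSlice_eq_empty_of_card_lt (P : Finset ℕ) (a b : ℕ) (h : P.card < a) :
    posSlice P a b = ∅ := by
  ext x
  simp only [mem_posSlice, Finset.notMem_empty, iff_false]
  rintro ⟨hx, h1, h2⟩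
  exact absurd (le_trans h1 (pos_le_card P x)) (by omega)

lemma posSlice_eq_image (P : Finset ℕ) (a b : ℕ) (ha : 1 ≤ a) (hb : b ≤ P.card) :
    posSlice P a b = (Finset.Icc a b).image (nth P) := by
  ext x
  simp only [mem_posSlice, Finset.mem_image, Finset.mem_Icc]
  constructor
  · rintro ⟨hx, h1, h2⟩
    exact ⟨pos P x, ⟨h1, h2⟩, nth_pos_eq P x hx⟩
  · rintro ⟨c, ⟨h1, h2⟩, rfl⟩
    have hc1 : 1 ≤ c := le_trans ha h1
    have hck : c ≤ P.card := le_trans h2 hb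
    exact ⟨nth_mem P c hc1 hck, by rw [pos_nth P c hc1 hck]; omega,
      by rw [pos_nth P c hc1 hck]; omega⟩

lemma posSlice_full (P : Finset ℕ) : posSlice P 1 P.card = P := by
  ext x
  simp only [mem_posSlice]
  exact ⟨fun h => h.1, fun h => ⟨h, pos_pos P x h, pos_le_card P x⟩⟩

lemma posSlice_congr (P Q : Finset ℕ) (a b : ℕ) (ha : 1 ≤ a) (hbP : b ≤ P.card)
    (hbQ : b ≤ Q.card) (h : ∀ c, a ≤ c → c ≤ b → nth P c = nth Q c) :
    posSlice P a b = posSlice Q a b := by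
  rw [posSlice_eq_image P a b ha hbP, posSlice_eq_image Q a b ha hbQ]
  apply Finset.image_congr
  intro c hc
  simp only [Finset.coe_Icc, Set.mem_Icc] at hc
  exact h c hc.1 hc.2

lemma posSlice_cons (P : Finset ℕ) (a : ℕ) (ha : 1 ≤ a) (hak : a ≤ P.card) :
    posSlice P a P.card = insert (nth P a) (posSlice P (a+1) P.card) := by
  rcases eq_or_lt_of_le hak with rfl | hlt
  · rw [posSlice_eq_empty_of_card_lt P (P.card+1) P.card (by omega)]
    rw [posSlice_eq_image P P.card P.card ha (le_refl _)]
    simp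
  · rw [posSlice_eq_image P a P.card ha (le_refl _),
      posSlice_eq_image P (a+1) P.card (by omega) (le_refl _)]
    rw [show Finset.Icc a P.card = insert a (Finset.Icc (a+1) P.card) by
      ext c; simp [Finset.mem_Icc, Finset.mem_insert]; omega]
    rw [Finset.image_insert]


/-! ### image and insert lemmas -/

lemma card_image_nth_aux (k : ℕ) (f : ℕ → ℕ)
    (hmono : ∀ c d, 1 ≤ c → c < d → d ≤ k → f c < f d) :
    ((Finset.Icc 1 k).image f).card = k := by
  rw [Finset.card_image_of_injOn, Nat.card_Icc]
  · omega
  · intro c hc d hd hcd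
    simp only [Finset.coe_Icc, Set.mem_Icc] at hc hd
    by_contra hne
    rcases lt_or_gt_of_ne hne with h | h
    · exact absurd hcd (ne_of_lt (hmono c d hc.1 h hd.2))
    · exact absurd hcd.symm (ne_of_lt (hmono d c hd.1 h hc.2))

lemma nth_image (k : ℕ) (f : ℕ → ℕ)
    (hmono : ∀ c d, 1 ≤ c → c < d → d ≤ k → f c < f d)
    (a : ℕ) (ha : 1 ≤ a) (hak : a ≤ k) :
    nth ((Finset.Icc 1 k).image f) a = f a := by
  set P := (Finset.Icc 1 k).image f with hP
  have hfa : f a ∈ P := Finset.mem_image.mpr ⟨a, Finset.mem_Icc.mpr ⟨ha, hak⟩, rfl⟩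
  have hpos : pos P (f a) = a := by
    have : P.filter (· ≤ f a) = (Finset.Icc 1 a).image f := by
      ext y
      simp only [Finset.mem_filter, hP, Finset.mem_image, Finset.mem_Icc]
      constructor
      · rintro ⟨⟨c, ⟨hc1, hc2⟩, rfl⟩, hle⟩
        refine ⟨c, ⟨hc1, ?_⟩, rfl⟩
        by_contra hca
        exact absurd hle (not_le.mpr (hmono a c ha (by omega) hc2))
      · rintro ⟨c, ⟨hc1, hc2⟩, rfl⟩
        refine ⟨⟨c, ⟨hc1, by omega⟩, rfl⟩, ?_⟩
        rcases eq_or_lt_of_le hc2 with rfl | h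
        · exact le_refl _
        · exact le_of_lt (hmono c a hc1 h hak)
    rw [pos, this, Finset.card_image_of_injOn, Nat.card_Icc]
    · omega
    · intro c hc d hd hcd
      simp only [Finset.coe_Icc, Set.mem_Icc] at hc hd
      by_contra hne
      rcases lt_or_gt_of_ne hne with h | h
      · exact absurd hcd (ne_of_lt (hmono c d hc.1 h (le_trans hd.2 hak)))
      · exact absurd hcd.symm (ne_of_lt (hmono d c hd.1 h (le_trans hc.2 hak)))
  have := nth_pos_eq P (f a) hfa
  rw [hpos] at this
  exact this

section InsertTop

variable {P : Finset ℕ} {v : ℕ} {k : ℕ}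

lemma not_mem_top (hP : P.card = k) (hv : ∀ x ∈ P, x < v) : v ∉ P :=
  fun h => absurd (hv v h) (lt_irrefl v)

lemma card_insert_top (hP : P.card = k) (hv : ∀ x ∈ P, x < v) :
    (insert v P).card = k + 1 := by
  rw [Finset.card_insert_of_notMem (not_mem_top hP hv), hP]

lemma pos_insert_of_mem (hv : ∀ x ∈ P, x < v) {x : ℕ} (hx : x ∈ P) :
    pos (insert v P) x = pos P x := by
  rw [pos, pos, Finset.filter_insert, if_neg (not_le.mpr (hv x hx))]

lemma pos_insert_self (hP : P.card = k) (hv : ∀ x ∈ P, x < v) :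
    pos (insert v P) v = k + 1 := by
  rw [pos, Finset.filter_insert, if_pos (le_refl v)]
  have : P.filter (· ≤ v) = P := Finset.filter_true_of_mem (fun x hx => le_of_lt (hv x hx))
  rw [this, Finset.card_insert_of_notMem (not_mem_top hP hv), hP]

lemma nth_insert_of_le (hP : P.card = k) (hv : ∀ x ∈ P, x < v)
    {a : ℕ} (ha : 1 ≤ a) (hak : a ≤ k) :
    nth (insert v P) a = nth P a := by
  have hmem : nth P a ∈ P := nth_mem P a ha (by omega)
  have h1 : nth (insert v P) (pos (insert v P) (nth P a)) = nth P a :=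
    nth_pos_eq _ _ (Finset.mem_insert_of_mem hmem)
  rw [pos_insert_of_mem hv hmem, pos_nth P a ha (by omega)] at h1
  exact h1

lemma nth_insert_top (hP : P.card = k) (hv : ∀ x ∈ P, x < v) :
    nth (insert v P) (k + 1) = v := by
  have h1 : nth (insert v P) (pos (insert v P) v) = v :=
    nth_pos_eq _ _ (Finset.mem_insert_self v P)
  rw [pos_insert_self hP hv] at h1
  exact h1

lemma posSlice_insert_of_le (hP : P.card = k) (hv : ∀ x ∈ P, x < v)
    {a b : ℕ} (hb : b ≤ k) :
    posSlice (insert v P) a b = posSlice P a b := by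
  ext x
  simp only [mem_posSlice, Finset.mem_insert]
  constructor
  · rintro ⟨rfl | hx, h1, h2⟩
    · rw [pos_insert_self hP hv] at h2; omega
    · rw [pos_insert_of_mem hv hx] at h1 h2
      exact ⟨hx, h1, h2⟩
  · rintro ⟨hx, h1, h2⟩
    exact ⟨Or.inr hx, by rwa [pos_insert_of_mem hv hx], by rwa [pos_insert_of_mem hv hx]⟩

lemma posSlice_insert_top (hP : P.card = k) (hv : ∀ x ∈ P, x < v)
    {a : ℕ} (ha : a ≤ k + 1) :
    posSlice (insert v P) a (k+1) = insert v (posSlice P a k) := by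
  ext x
  simp only [mem_posSlice, Finset.mem_insert]
  constructor
  · rintro ⟨rfl | hx, h1, h2⟩
    · exact Or.inl rfl
    · rw [pos_insert_of_mem hv hx] at h1 h2
      exact Or.inr ⟨hx, h1, le_trans (pos_le_card P x) (le_of_eq hP)⟩
  · rintro (rfl | ⟨hx, h1, h2⟩)
    · exact ⟨Or.inl rfl, by rw [pos_insert_self hP hv]; omega⟩
    · exact ⟨Or.inr hx, by rwa [pos_insert_of_mem hv hx], by rw [pos_insert_of_mem hv hx]; omega⟩

end InsertTop

section DropTop

variable {S : Finset ℕ} {k : ℕ}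

/-- dropping the top element -/
lemma dropTop_eq_image (hS : S.card = k + 1) :
    posSlice S 1 k = (Finset.Icc 1 k).image (nth S) :=
  posSlice_eq_image S 1 k (le_refl _) (by omega)

lemma dropTop_card (hS : S.card = k + 1) : (posSlice S 1 k).card = k := by
  rw [dropTop_eq_image hS]
  exact card_image_nth_aux k (nth S) (fun c d hc hcd hd => nth_lt_nth S c d hc hcd (by omega))

lemma dropTop_lt (hS : S.card = k + 1) : ∀ x ∈ posSlice S 1 k, x < nth S (k+1) := by
  intro x hx
  rw [dropTop_eq_image hS] at hx
  rcases Finset.mem_image.mp hx with ⟨c, hc, rfl⟩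
  rw [Finset.mem_Icc] at hc
  exact nth_lt_nth S c (k+1) hc.1 (by omega) (by omega)

lemma dropTop_nth (hS : S.card = k + 1) {a : ℕ} (ha : 1 ≤ a) (hak : a ≤ k) :
    nth (posSlice S 1 k) a = nth S a := by
  rw [dropTop_eq_image hS]
  exact nth_image k (nth S) (fun c d hc hcd hd => nth_lt_nth S c d hc hcd (by omega)) a ha hak

lemma insert_dropTop (hS : S.card = k + 1) :
    insert (nth S (k+1)) (posSlice S 1 k) = S := by
  rw [dropTop_eq_image hS]
  have h1 : Finset.Icc 1 (k+1) = insert (k+1) (Finset.Icc 1 k) := by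
    ext c; simp [Finset.mem_Icc, Finset.mem_insert]; omega
  have h2 : S = (Finset.Icc 1 (k+1)).image (nth S) := by
    conv_lhs => rw [← posSlice_full S]
    rw [hS, posSlice_eq_image S 1 (k+1) (le_refl _) (by omega)]
  conv_rhs => rw [h2, h1, Finset.image_insert]

end DropTop

/-! ### Weak separation lemmas -/

lemma ws_symm {I J : Finset ℕ} (h : WeaklySeparated I J) : WeaklySeparated J I := by
  rcases h with ⟨I1, I2, h1, h2, h3, h4⟩ | ⟨J1, J2, h1, h2, h3, h4⟩
  · exact Or.inr ⟨I1, I2, h1, h2, h3, h4⟩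
  · exact Or.inl ⟨J1, J2, h1, h2, h3, h4⟩

lemma ws_of_sdiff_subset_singleton {I J : Finset ℕ} (x : ℕ) (h : I \ J ⊆ {x}) :
    WeaklySeparated I J := by
  refine Or.inr ⟨(J \ I).filter (· < x), (J \ I).filter (x ≤ ·), ?_, ?_, ?_, ?_⟩
  · rw [Finset.disjoint_left]
    intro a ha hb
    rw [Finset.mem_filter] at ha hb
    omega
  · ext j
    simp only [Finset.mem_union, Finset.mem_filter]
    constructor
    · rintro (⟨hj, _⟩ | ⟨hj, _⟩) <;> exact hj
    · intro hj
      rcases lt_or_ge j x with h' | h'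
      · exact Or.inl ⟨hj, h'⟩
      · exact Or.inr ⟨hj, h'⟩
  · intro i hi j hj
    rw [Finset.mem_filter] at hi
    have := h hj
    rw [Finset.mem_singleton] at this
    omega
  · intro i hi j hj
    rw [Finset.mem_filter] at hj
    have hix := h hi
    rw [Finset.mem_singleton] at hix
    subst hix
    rcases eq_or_lt_of_le hj.2 with rfl | h'
    · exact absurd (Finset.mem_sdiff.mp hj.1).1 (fun hc => (Finset.mem_sdiff.mp hi).2 hc)
    · exact h'

lemma ws_insert_insert {X : Finset ℕ} (v w : ℕ) :
    WeaklySeparated (insert v X) (insert w X) := by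
  apply ws_of_sdiff_subset_singleton v
  intro y hy
  rw [Finset.mem_sdiff, Finset.mem_insert] at hy
  rcases hy.1 with rfl | hyX
  · exact Finset.mem_singleton_self _
  · exact absurd (Finset.mem_insert_of_mem hyX) hy.2

lemma not_ws {I J : Finset ℕ} {p q v w : ℕ}
    (hpI : p ∈ I) (hpJ : p ∉ J) (hvI : v ∈ I) (hvJ : v ∉ J)
    (hqJ : q ∈ J) (hqI : q ∉ I) (hwJ : w ∈ J) (hwI : w ∉ I)
    (h1 : p < q) (h2 : q < v) (h3 : v < w) : ¬ WeaklySeparated I J := by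
  have hvd : v ∈ I \ J := Finset.mem_sdiff.mpr ⟨hvI, hvJ⟩
  have hpd : p ∈ I \ J := Finset.mem_sdiff.mpr ⟨hpI, hpJ⟩
  have hqd : q ∈ J \ I := Finset.mem_sdiff.mpr ⟨hqJ, hqI⟩
  have hwd : w ∈ J \ I := Finset.mem_sdiff.mpr ⟨hwJ, hwI⟩
  rintro (⟨I1, I2, hd, hu, hl1, hl2⟩ | ⟨J1, J2, hd, hu, hl1, hl2⟩)
  · rw [← hu, Finset.mem_union] at hvd
    rcases hvd with h | h
    · exact absurd (hl1 v h q hqd) (by omega)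
    · exact absurd (hl2 w hwd v h) (by omega)
  · rw [← hu, Finset.mem_union] at hqd
    rcases hqd with h | h
    · exact absurd (hl1 q h p hpd) (by omega)
    · exact absurd (hl2 v hvd q h) (by omega)

/-! ### Compatibility -/

def Compat (k : ℕ) (P : Finset ℕ) (v : ℕ) (Q : Finset ℕ) (w : ℕ) : Prop :=
  ∀ a, 1 ≤ a → a ≤ k →
    WeaklySeparated (insert v (posSlice P a k)) (insert w (posSlice Q a k)) ∨
    posSlice P (a+1) k ≠ posSlice Q (a+1) k

lemma compat_symm {k : ℕ} {P Q : Finset ℕ} {v w : ℕ} (h : Compat k P v Q w) :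
    Compat k Q w P v := by
  intro a h1 h2
  rcases h a h1 h2 with h | h
  · exact Or.inl (ws_symm h)
  · exact Or.inr (Ne.symm h)

lemma compat_of_eq {k : ℕ} {P : Finset ℕ} (v w : ℕ) : Compat k P v P w := by
  intro a h1 h2
  exact Or.inl (ws_insert_insert v w)

lemma noncrossing_symm {k : ℕ} {I J : Finset ℕ} (h : Noncrossing k I J) :
    Noncrossing k J I := by
  intro a b h1 h2 h3
  rcases h a b h1 h2 h3 with h | h
  · exact Or.inl (ws_symm h)
  · exact Or.inr (Ne.symm h)

lemma noncrossing_refl (k : ℕ) (I : Finset ℕ) : Noncrossing k I I := by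
  intro a b h1 h2 h3
  exact Or.inl (Or.inl ⟨∅, ∅, Finset.disjoint_empty_left _, by simp,
    fun i hi => absurd hi (Finset.notMem_empty i),
    fun i hi j hj => absurd hj (Finset.notMem_empty j)⟩)

/-! ### The splitting lemma -/

lemma noncrossing_split {k : ℕ} {P Q : Finset ℕ} {v w : ℕ}
    (hP : P.card = k) (hQ : Q.card = k) (hv : ∀ x ∈ P, x < v) (hw : ∀ x ∈ Q, x < w) :
    Noncrossing (k+1) (insert v P) (insert w Q) ↔ (Noncrossing k P Q ∧ Compat k P v Q w) := by
  constructor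
  · intro h
    constructor
    · intro a b h1 h2 h3
      have := h a b h1 h2 (by omega)
      rwa [posSlice_insert_of_le hP hv h3, posSlice_insert_of_le hQ hw h3,
        posSlice_insert_of_le hP hv (by omega : b - 1 ≤ k),
        posSlice_insert_of_le hQ hw (by omega : b - 1 ≤ k)] at this
    · intro a h1 h2
      have := h a (k+1) h1 (by omega) (le_refl _)
      rwa [posSlice_insert_top hP hv (by omega), posSlice_insert_top hQ hw (by omega),
        show k + 1 - 1 = k from rfl,
        posSlice_insert_of_le hP hv (le_refl k),
        posSlice_insert_of_le hQ hw (le_refl k)] at this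
  · rintro ⟨hnc, hcomp⟩ a b h1 h2 h3
    rcases eq_or_lt_of_le h3 with rfl | hbk
    · have := hcomp a h1 (by omega)
      rwa [← posSlice_insert_top hP hv (by omega : a ≤ k + 1),
        ← posSlice_insert_top hQ hw (by omega : a ≤ k + 1),
        ← posSlice_insert_of_le hP hv (le_refl k),
        ← posSlice_insert_of_le hQ hw (le_refl k),
        show k = k + 1 - 1 from rfl] at this
    · have hb : b ≤ k := by omega
      have := hnc a b h1 h2 hb
      rwa [← posSlice_insert_of_le hP hv hb, ← posSlice_insert_of_le hQ hw hb,
        ← posSlice_insert_of_le hP hv (by omega : b - 1 ≤ k),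
        ← posSlice_insert_of_le hQ hw (by omega : b - 1 ≤ k)] at this

lemma posSlice_subset (P : Finset ℕ) (a b : ℕ) : posSlice P a b ⊆ P :=
  Finset.filter_subset _ _

section Arith

variable {k : ℕ} {P Q : Finset ℕ} {v w a0 : ℕ}

/-- sufficiency of the arithmetic condition for compatibility -/
lemma compat_suf (hP : P.card = k) (hQ : Q.card = k) (hv : ∀ x ∈ P, x < v)
    (hw : ∀ x ∈ Q, x < w) (ha1 : 1 ≤ a0) (hak : a0 ≤ k)
    (hlt : nth P a0 < nth Q a0) (hab : ∀ c, a0 < c → c ≤ k → nth P c = nth Q c)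
    (harith : w ≤ v ∨ (a0 = k ∧ v ≤ nth Q k)) :
    Compat k P v Q w := by
  intro a h1 h2
  rcases lt_trichotomy a a0 with hcase | hcase | hcase
  · -- interior slices differ
    refine Or.inr (fun heq => ?_)
    have hq : nth Q a0 ∈ posSlice Q (a+1) k := by
      rw [posSlice_eq_image Q (a+1) k (by omega) (by rw [hQ])]
      exact Finset.mem_image.mpr ⟨a0, Finset.mem_Icc.mpr ⟨by omega, hak⟩, rfl⟩
    rw [← heq, posSlice_eq_image P (a+1) k (by omega) (by rw [hP])] at hq
    rcases Finset.mem_image.mp hq with ⟨c, hc, hceq⟩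
    rw [Finset.mem_Icc] at hc
    rcases le_or_gt c a0 with h' | h'
    · have : nth P c ≤ nth P a0 := nth_le_nth P c a0 (by omega) h' (by rw [hP]; exact hak)
      omega
    · have hcc : nth P c = nth Q c := hab c h' hc.2
      have : nth Q a0 < nth Q c := nth_lt_nth Q a0 c ha1 h' (by rw [hQ]; exact hc.2)
      omega
  · -- a = a0 : the main window
    subst hcase
    refine Or.inl ?_
    have hXP : posSlice P a k = insert (nth P a) (posSlice P (a+1) k) := by
      have := posSlice_cons P a h1 (by rw [hP]; exact hak)
      rwa [hP] at this
    have hYQ : posSlice Q a k = insert (nth Q a) (posSlice Q (a+1) k) := by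
      have := posSlice_cons Q a h1 (by rw [hQ]; exact hak)
      rwa [hQ] at this
    have hCC : posSlice P (a+1) k = posSlice Q (a+1) k :=
      posSlice_congr P Q (a+1) k (by omega) (by rw [hP]) (by rw [hQ])
        (fun c hc1 hc2 => hab c (by omega) hc2)
    obtain ⟨C, hC⟩ : ∃ C, posSlice P (a+1) k = C := ⟨_, rfl⟩
    obtain ⟨p, hp⟩ : ∃ p, nth P a = p := ⟨_, rfl⟩
    obtain ⟨q, hq⟩ : ∃ q, nth Q a = q := ⟨_, rfl⟩
    rw [hC, hp] at hXP
    rw [hC] at hCC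
    rw [← hCC, hq] at hYQ
    rw [hXP, hYQ]
    have hpq : p < q := by rw [← hp, ← hq]; exact hlt
    have hpP : p ∈ P := by rw [← hp]; exact nth_mem P a h1 (by rw [hP]; exact hak)
    have hqQ : q ∈ Q := by rw [← hq]; exact nth_mem Q a h1 (by rw [hQ]; exact hak)
    have hCP : C ⊆ P := by rw [← hC]; exact posSlice_subset P _ _
    have hCQ : C ⊆ Q := by rw [hCC]; exact posSlice_subset Q _ _
    have hqC : ∀ c ∈ C, q < c := by
      intro c hc
      rw [hCC, posSlice_eq_image Q (a+1) k (by omega) (by rw [hQ])] at hc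
      rcases Finset.mem_image.mp hc with ⟨d, hd, rfl⟩
      rw [Finset.mem_Icc] at hd
      rw [← hq]
      exact nth_lt_nth Q a d h1 (by omega) (by rw [hQ]; exact hd.2)
    have hpC : ∀ c ∈ C, p < c := fun c hc => lt_trans hpq (hqC c hc)
    have hpv : p < v := hv p hpP
    have hqw : q < w := hw q hqQ
    have hCv : ∀ c ∈ C, c < v := fun c hc => hv c (hCP hc)
    have hCw : ∀ c ∈ C, c < w := fun c hc => hw c (hCQ hc)
    have hpw : p < w := lt_trans hpq hqw
    by_cases hvw : v = w
    · subst hvw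
      apply ws_of_sdiff_subset_singleton p
      intro y hy
      rw [Finset.mem_sdiff] at hy
      rcases Finset.mem_insert.mp hy.1 with rfl | hy'
      · exact absurd (Finset.mem_insert_self _ _) hy.2
      rcases Finset.mem_insert.mp hy' with rfl | hy''
      · exact Finset.mem_singleton_self _
      · exact absurd (Finset.mem_insert_of_mem (Finset.mem_insert_of_mem hy'')) hy.2
    · have harith' : w < v ∨ (a = k ∧ v ≤ q) := by
        rcases harith with h | ⟨hk', hvq⟩
        · exact Or.inl (lt_of_le_of_ne h (Ne.symm hvw))
        · refine Or.inr ⟨hk', ?_⟩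
          rw [← hq, hk']
          exact hvq
      rcases harith' with hwv | ⟨hk', hvq⟩
      · -- w < v : nested witnesses {p}, {v}
        have hqv : q < v := lt_trans hqw hwv
        refine Or.inl ⟨{p}, {v}, by simp [Finset.disjoint_left]; omega, ?_, ?_, ?_⟩
        · ext y
          simp only [Finset.mem_union, Finset.mem_singleton, Finset.mem_sdiff,
            Finset.mem_insert]
          constructor
          · rintro (rfl | rfl)
            · refine ⟨Or.inr (Or.inl rfl), ?_⟩
              rintro (rfl | rfl | hc)
              · omega
              · omega
              · exact absurd (hpC _ hc) (lt_irrefl _)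
            · refine ⟨Or.inl rfl, ?_⟩
              rintro (rfl | rfl | hc)
              · omega
              · omega
              · exact absurd (hCv _ hc) (lt_irrefl _)
          · rintro ⟨rfl | rfl | hc, hnj⟩
            · exact Or.inr rfl
            · exact Or.inl rfl
            · exact absurd (Or.inr (Or.inr hc)) hnj
        · intro i hi j hj
          rw [Finset.mem_singleton] at hi
          subst hi
          have hjJ := (Finset.mem_sdiff.mp hj).1
          rcases Finset.mem_insert.mp hjJ with rfl | hj'
          · exact hpw
          rcases Finset.mem_insert.mp hj' with rfl | hj''
          · exact hpq
          · exact hpC _ hj''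
        · intro i hi j hj
          rw [Finset.mem_singleton] at hj
          subst hj
          have hiJ := (Finset.mem_sdiff.mp hi).1
          rcases Finset.mem_insert.mp hiJ with rfl | hi'
          · exact hwv
          rcases Finset.mem_insert.mp hi' with rfl | hi''
          · exact hqv
          · exact hCv _ hi''
      · -- a = k, v ≤ q
        have hCemp : C = ∅ := by
          rw [← hC]
          exact posSlice_eq_empty_of_card_lt P (a+1) k (by rw [hP]; omega)
        subst hCemp
        rcases eq_or_lt_of_le hvq with hveq | hvlt
        · apply ws_of_sdiff_subset_singleton p
          intro y hy
          rw [Finset.mem_sdiff] at hy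
          rcases Finset.mem_insert.mp hy.1 with rfl | hy'
          · refine absurd ?_ hy.2
            rw [hveq]
            exact Finset.mem_insert_of_mem (Finset.mem_insert_self _ _)
          rcases Finset.mem_insert.mp hy' with rfl | hy''
          · exact Finset.mem_singleton_self _
          · exact absurd hy'' (Finset.notMem_empty _)
        · refine Or.inl ⟨insert v (insert p ∅) \ insert w (insert q ∅), ∅,
            Finset.disjoint_empty_right _, Finset.union_empty _, ?_, ?_⟩
          · intro i hi j hj
            have hiI := (Finset.mem_sdiff.mp hi).1
            have hjJ := (Finset.mem_sdiff.mp hj).1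
            have hi' : i = v ∨ i = p := by
              rcases Finset.mem_insert.mp hiI with h' | h'
              · exact Or.inl h'
              rcases Finset.mem_insert.mp h' with h'' | h''
              · exact Or.inr h''
              · exact absurd h'' (Finset.notMem_empty _)
            have hj' : j = w ∨ j = q := by
              rcases Finset.mem_insert.mp hjJ with h' | h'
              · exact Or.inl h'
              rcases Finset.mem_insert.mp h' with h'' | h''
              · exact Or.inr h''
              · exact absurd h'' (Finset.notMem_empty _)
            rcases hi' with rfl | rfl <;> rcases hj' with rfl | rfl <;> omega
          · intro i hi j hj
            exact absurd hj (Finset.notMem_empty _)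
  · -- a > a0 : slices of the window agree
    refine Or.inl ?_
    have heq : posSlice P a k = posSlice Q a k :=
      posSlice_congr P Q a k h1 (by rw [hP]) (by rw [hQ])
        (fun c hc1 hc2 => hab c (by omega) hc2)
    rw [heq]
    exact ws_insert_insert v w

/-- necessity of the arithmetic condition -/
lemma compat_nec (hP : P.card = k) (hQ : Q.card = k) (hv : ∀ x ∈ P, x < v)
    (hw : ∀ x ∈ Q, x < w) (ha1 : 1 ≤ a0) (hak : a0 ≤ k)
    (hlt : nth P a0 < nth Q a0) (hab : ∀ c, a0 < c → c ≤ k → nth P c = nth Q c)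
    (hcomp : Compat k P v Q w) :
    w ≤ v ∨ (a0 = k ∧ v ≤ nth Q k) := by
  by_contra hcon
  push_neg at hcon
  obtain ⟨hvw, hcon2⟩ := hcon
  -- extract the weak separation at window a0
  have hCC : posSlice P (a0+1) k = posSlice Q (a0+1) k :=
    posSlice_congr P Q (a0+1) k (by omega) (by rw [hP]) (by rw [hQ])
      (fun c hc1 hc2 => hab c (by omega) hc2)
  have hws : WeaklySeparated (insert v (posSlice P a0 k)) (insert w (posSlice Q a0 k)) := by
    rcases hcomp a0 ha1 hak with h | h
    · exact h
    · exact absurd hCC h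
  have hXP : posSlice P a0 k = insert (nth P a0) (posSlice P (a0+1) k) := by
    have := posSlice_cons P a0 ha1 (by rw [hP]; exact hak)
    rwa [hP] at this
  have hYQ : posSlice Q a0 k = insert (nth Q a0) (posSlice P (a0+1) k) := by
    have := posSlice_cons Q a0 ha1 (by rw [hQ]; exact hak)
    rw [hQ] at this
    rw [this, hCC]
  obtain ⟨C, hC⟩ : ∃ C, posSlice P (a0+1) k = C := ⟨_, rfl⟩
  obtain ⟨p, hp⟩ : ∃ p, nth P a0 = p := ⟨_, rfl⟩
  obtain ⟨q, hq⟩ : ∃ q, nth Q a0 = q := ⟨_, rfl⟩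
  rw [hC, hp] at hXP
  rw [hC, hq] at hYQ
  rw [hXP, hYQ] at hws
  have hpq : p < q := by rw [← hp, ← hq]; exact hlt
  have hpP : p ∈ P := by rw [← hp]; exact nth_mem P a0 ha1 (by rw [hP]; exact hak)
  have hqQ : q ∈ Q := by rw [← hq]; exact nth_mem Q a0 ha1 (by rw [hQ]; exact hak)
  have hCP : C ⊆ P := by rw [← hC]; exact posSlice_subset P _ _
  have hCQ : C ⊆ Q := by rw [← hC, hCC]; exact posSlice_subset Q _ _
  have hqC : ∀ c ∈ C, q < c := by
    intro c hc
    rw [← hC, hCC, posSlice_eq_image Q (a0+1) k (by omega) (by rw [hQ])] at hc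

    rcases Finset.mem_image.mp hc with ⟨d, hd, rfl⟩
    rw [Finset.mem_Icc] at hd
    rw [← hq]
    exact nth_lt_nth Q a0 d ha1 (by omega) (by rw [hQ]; exact hd.2)
  have hpC : ∀ c ∈ C, p < c := fun c hc => lt_trans hpq (hqC c hc)
  have hpv : p < v := hv p hpP
  have hqw : q < w := hw q hqQ
  have hCv : ∀ c ∈ C, c < v := fun c hc => hv c (hCP hc)
  have hCw : ∀ c ∈ C, c < w := fun c hc => hw c (hCQ hc)
  have hpw : p < w := lt_trans hpq hqw
  -- q < v
  have hqv : q < v := by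
    rcases eq_or_lt_of_le hak with hk' | hk'
    · -- a0 = k
      have h5 := hcon2 hk'
      rw [← hk', hq] at h5
      omega
    · -- a0 < k : C is nonempty
      have hkC : nth P k ∈ C := by
        rw [← hC, posSlice_eq_image P (a0+1) k (by omega) (by rw [hP])]
        exact Finset.mem_image.mpr ⟨k, Finset.mem_Icc.mpr ⟨by omega, le_refl k⟩, rfl⟩
      exact lt_trans (hqC _ hkC) (hCv _ hkC)
  -- crossing pattern p < q < v < w
  refine not_ws (p := p) (q := q) (v := v) (w := w) ?_ ?_ ?_ ?_ ?_ ?_ ?_ ?_ hpq hqv hvw hws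
  · exact Finset.mem_insert_of_mem (Finset.mem_insert_self _ _)
  · -- p ∉ J
    intro h
    rcases Finset.mem_insert.mp h with h' | h'
    · omega
    rcases Finset.mem_insert.mp h' with h'' | h''
    · omega
    · exact absurd (hpC _ h'') (by omega)
  · exact Finset.mem_insert_self _ _
  · intro h
    rcases Finset.mem_insert.mp h with h' | h'
    · omega
    rcases Finset.mem_insert.mp h' with h'' | h''
    · omega
    · exact absurd (hCv _ h'') (by omega)
  · exact Finset.mem_insert_of_mem (Finset.mem_insert_self _ _)
  · intro h
    rcases Finset.mem_insert.mp h with h' | h'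
    · omega
    rcases Finset.mem_insert.mp h' with h'' | h''
    · omega
    · exact absurd (hqC _ h'') (by omega)
  · exact Finset.mem_insert_self _ _
  · intro h
    rcases Finset.mem_insert.mp h with h' | h'
    · omega
    rcases Finset.mem_insert.mp h' with h'' | h''
    · omega
    · exact absurd (hCw _ h'') (by omega)

end Arith

/-! ### a total order on columns -/

/-- reverse-lexicographic (from the top) comparison: `rk P Q` means `P ≥ Q`. -/
def rk (P Q : Finset ℕ) : Prop :=
  Q.card < P.card ∨ (P.card = Q.card ∧ (P = Q ∨
    ∃ a, 1 ≤ a ∧ nth Q a < nth P a ∧ ∀ c, a < c → nth P c = nth Q c))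

lemma nth_congr_of_eq {P Q : Finset ℕ} (h : P = Q) (a : ℕ) : nth P a = nth Q a := by rw [h]

/-- two sets of the same cardinality whose `nth` agree are equal -/
lemma eq_of_nth_eq {P Q : Finset ℕ} (hcard : P.card = Q.card)
    (h : ∀ a, 1 ≤ a → a ≤ P.card → nth P a = nth Q a) : P = Q := by
  conv_lhs => rw [← posSlice_full P]
  conv_rhs => rw [← posSlice_full Q]
  rw [posSlice_eq_image P 1 P.card (le_refl _) (le_refl _),
    posSlice_eq_image Q 1 Q.card (le_refl _) (le_refl _), ← hcard]
  apply Finset.image_congr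
  intro c hc
  simp only [Finset.coe_Icc, Set.mem_Icc] at hc
  exact h c hc.1 hc.2

/-- existence of the maximal disagreement -/
lemma exists_max_diff {P Q : Finset ℕ} (hcard : P.card = Q.card) (hne : P ≠ Q) :
    ∃ a, 1 ≤ a ∧ a ≤ P.card ∧ nth P a ≠ nth Q a ∧ ∀ c, a < c → nth P c = nth Q c := by
  set A := (Finset.Icc 1 P.card).filter (fun a => nth P a ≠ nth Q a) with hA
  have hAne : A.Nonempty := by
    by_contra hemp
    rw [Finset.not_nonempty_iff_eq_empty] at hemp
    apply hne
    apply eq_of_nth_eq hcard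
    intro a ha1 ha2
    by_contra hne'
    have : a ∈ A := Finset.mem_filter.mpr ⟨Finset.mem_Icc.mpr ⟨ha1, ha2⟩, hne'⟩
    rw [hemp] at this
    exact absurd this (Finset.notMem_empty a)
  have haA := A.max'_mem hAne
  have hamax : ∀ b ∈ A, b ≤ A.max' hAne := fun b hb => A.le_max' b hb
  set a := A.max' hAne with ha
  rw [hA, Finset.mem_filter, Finset.mem_Icc] at haA
  refine ⟨a, haA.1.1, haA.1.2, haA.2, ?_⟩
  intro c hc
  by_contra hne'
  rcases le_or_gt c P.card with h' | h'
  · have : c ∈ A := Finset.mem_filter.mpr ⟨Finset.mem_Icc.mpr ⟨by omega, h'⟩, hne'⟩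
    exact absurd (hamax c this) (by omega)
  · rw [nth_eq_zero P c h', nth_eq_zero Q c (by omega)] at hne'
    exact hne' rfl

lemma rk_total (P Q : Finset ℕ) : rk P Q ∨ rk Q P := by
  rcases lt_trichotomy P.card Q.card with h | h | h
  · exact Or.inr (Or.inl h)
  · by_cases heq : P = Q
    · exact Or.inl (Or.inr ⟨h, Or.inl heq⟩)
    · obtain ⟨a, ha1, hak, hne, hab⟩ := exists_max_diff h heq
      rcases lt_or_gt_of_ne hne with h' | h'
      · exact Or.inr (Or.inr ⟨h.symm, Or.inr ⟨a, ha1, h', fun c hc => (hab c hc).symm⟩⟩)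
      · exact Or.inl (Or.inr ⟨h, Or.inr ⟨a, ha1, h', hab⟩⟩)
  · exact Or.inl (Or.inl h)

lemma rk_antisymm (P Q : Finset ℕ) (h1 : rk P Q) (h2 : rk Q P) : P = Q := by
  rcases h1 with h1 | ⟨hc1, h1⟩
  · rcases h2 with h2 | ⟨hc2, h2⟩ <;> omega
  · rcases h2 with h2 | ⟨hc2, h2⟩
    · omega
    · rcases h1 with h1 | ⟨a, ha1, halt, hab⟩
      · exact h1
      · rcases h2 with h2 | ⟨b, hb1, hblt, hbab⟩
        · exact h2.symm
        · rcases lt_trichotomy a b with h' | h' | h'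
          · have := hab b h'
            omega
          · subst h'
            omega
          · have := hbab a h'
            omega

lemma rk_trans (P Q R : Finset ℕ) (h1 : rk P Q) (h2 : rk Q R) : rk P R := by
  rcases h1 with h1 | ⟨hc1, h1⟩
  · rcases h2 with h2 | ⟨hc2, h2⟩
    · exact Or.inl (by omega)
    · exact Or.inl (by omega)
  · rcases h2 with h2 | ⟨hc2, h2⟩
    · exact Or.inl (by omega)
    · refine Or.inr ⟨by omega, ?_⟩
      rcases h1 with rfl | ⟨a, ha1, halt, hab⟩
      · exact h2
      · rcases h2 with rfl | ⟨b, hb1, hblt, hbab⟩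
        · exact Or.inr ⟨a, ha1, halt, hab⟩
        · rcases lt_trichotomy a b with h' | h' | h'
          · refine Or.inr ⟨b, hb1, ?_, ?_⟩
            · have := hab b h'
              omega
            · intro c hc
              rw [hab c (by omega), hbab c hc]
          · subst h'
            refine Or.inr ⟨a, ha1, by omega, ?_⟩
            intro c hc
            rw [hab c hc, hbab c hc]
          · refine Or.inr ⟨a, ha1, ?_, ?_⟩
            · have := hbab a h'
              omega
            · intro c hc
              rw [hab c hc, hbab c (by omega)]

noncomputable instance : DecidableRel rk := Classical.decRel rk

instance : IsTrans (Finset ℕ) rk := ⟨rk_trans⟩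
instance : IsAntisymm (Finset ℕ) rk := ⟨rk_antisymm⟩
instance : IsTotal (Finset ℕ) rk := ⟨rk_total⟩

/-- extract the top-disagreement data from `rk` for distinct sets of equal card -/
lemma rk_extract {k : ℕ} {P Q : Finset ℕ} (hP : P.card = k) (hQ : Q.card = k)
    (h : rk P Q) (hne : P ≠ Q) :
    ∃ a, 1 ≤ a ∧ a ≤ k ∧ nth Q a < nth P a ∧ ∀ c, a < c → c ≤ k → nth P c = nth Q c := by
  rcases h with h | ⟨hc, h⟩
  · omega
  · rcases h with h | ⟨a, ha1, halt, hab⟩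
    · exact absurd h hne
    · refine ⟨a, ha1, ?_, halt, fun c hc _ => hab c hc⟩
      by_contra h'
      rw [nth_eq_zero P a (by omega)] at halt
      omega

/-! ### multiset helpers -/

lemma multiset_pairwise_cons {α : Type*} {r : α → α → Prop} (hsymm : Symmetric r)
    {p : α} {N : Multiset α} :
    (p ::ₘ N).Pairwise r ↔ (∀ q ∈ N, r p q) ∧ N.Pairwise r := by
  induction N using Quotient.inductionOn with
  | h l =>
    change Multiset.Pairwise r (↑(p :: l)) ↔ (∀ q ∈ (↑l : Multiset α), r p q) ∧
      Multiset.Pairwise r ↑l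
    rw [@Multiset.pairwise_coe_iff_pairwise _ _ ⟨fun _ _ h => hsymm h⟩ _,
      @Multiset.pairwise_coe_iff_pairwise _ _ ⟨fun _ _ h => hsymm h⟩ _,
      List.pairwise_cons]
    simp only [Multiset.mem_coe]

lemma multiset_pairwise_forall {α : Type*} {r : α → α → Prop} (hsymm : Symmetric r)
    {N : Multiset α} (h : N.Pairwise r) {p q : α} (hp : p ∈ N) (hq : q ∈ N) (hne : p ≠ q) :
    r p q := by
  obtain ⟨l, hl, hpw⟩ := h
  subst hl
  exact (haveI : Std.Symm r := ⟨fun _ _ h => hsymm h⟩; List.Pairwise.forall hpw) (Multiset.mem_coe.mp hp) (Multiset.mem_coe.mp hq) hne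

/-- the minimum element of `R` strictly above `t` -/
noncomputable def minAbove (R : Multiset ℕ) (t : ℕ) : ℕ :=
  if h : ((R.filter (t < ·)).toFinset.Nonempty) then (R.filter (t < ·)).toFinset.min' h else 0

lemma minAbove_spec {R : Multiset ℕ} {t : ℕ} (h : ∃ x ∈ R, t < x) :
    minAbove R t ∈ R ∧ t < minAbove R t ∧ ∀ x ∈ R, t < x → minAbove R t ≤ x := by
  obtain ⟨x, hx, htx⟩ := h
  have hne : ((R.filter (t < ·)).toFinset.Nonempty) :=
    ⟨x, Multiset.mem_toFinset.mpr (Multiset.mem_filter.mpr ⟨hx, htx⟩)⟩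
  rw [minAbove, dif_pos hne]
  have hmem := Finset.min'_mem _ hne
  rw [Multiset.mem_toFinset, Multiset.mem_filter] at hmem
  refine ⟨hmem.1, hmem.2, ?_⟩
  intro y hy hty
  exact Finset.min'_le _ y (Multiset.mem_toFinset.mpr (Multiset.mem_filter.mpr ⟨hy, hty⟩))

/-- top entry of a column -/
def topOf (P : Finset ℕ) : ℕ := nth P P.card

lemma le_topOf {P : Finset ℕ} {x : ℕ} (hx : x ∈ P) : x ≤ topOf P := le_nth_card P x hx

/-! ### valid extensions -/

/-- pair compatibility -/
def CompatP (k : ℕ) (p q : Finset ℕ × ℕ) : Prop := Compat k p.1 p.2 q.1 q.2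

lemma compatP_symm (k : ℕ) : Symmetric (CompatP k) := fun _ _ h => compat_symm h

/-- a valid extension of the multiset `F` of `k`-columns by the values `R` -/
def VE (k : ℕ) (F : Multiset (Finset ℕ)) (R : Multiset ℕ) (N : Multiset (Finset ℕ × ℕ)) : Prop :=
  N.map Prod.fst = F ∧ N.map Prod.snd = R ∧
  (∀ p ∈ N, p.1.card = k ∧ ∀ x ∈ p.1, x < p.2) ∧ N.Pairwise (CompatP k)

lemma fst_const_eq {N : Multiset (Finset ℕ × ℕ)} (c : Finset ℕ)
    (h : ∀ p ∈ N, p.1 = c) : N = (N.map Prod.snd).map (fun v => (c, v)) := by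
  induction N using Multiset.induction_on with
  | empty => simp
  | cons a N ih =>
    rw [Multiset.map_cons, Multiset.map_cons, ← ih (fun p hp => h p (Multiset.mem_cons_of_mem hp))]
    congr 1
    have := h a (Multiset.mem_cons_self a N)
    rw [← this]

/-- the key membership lemma: any valid extension contains the distinguished pair -/
lemma ve_mem_pair {k : ℕ} {F : Multiset (Finset ℕ)} {R : Multiset ℕ}
    {N : Multiset (Finset ℕ × ℕ)} (hk : 1 ≤ k) (hVE : VE k F R N)
    {Pm : Finset ℕ} (hPm : Pm ∈ F) (hmax : ∀ Q ∈ F, rk Pm Q) :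
    (Pm, minAbove R (topOf Pm)) ∈ N := by
  obtain ⟨hfst, hsnd, hprop, hpw⟩ := hVE
  rw [← hfst] at hPm
  obtain ⟨⟨P1, u⟩, hpN, hp1⟩ := Multiset.mem_map.mp hPm
  have hP1 : P1 = Pm := hp1
  subst hP1
  have hpcard : P1.card = k := (hprop _ hpN).1
  have hptop : topOf P1 < u := by
    have h1 : nth P1 k ∈ P1 := nth_mem P1 k hk (by omega)
    have := (hprop _ hpN).2 _ h1
    rw [topOf, hpcard]
    exact this
  have hfeas : ∃ x ∈ R, topOf P1 < x := by
    refine ⟨u, ?_, hptop⟩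
    rw [← hsnd]
    exact Multiset.mem_map_of_mem _ hpN
  obtain ⟨hvR, hvgt, hvmin⟩ := minAbove_spec hfeas
  set v := minAbove R (topOf P1) with hv
  rw [← hsnd] at hvR
  obtain ⟨⟨Q1, v'⟩, hqN, hq2⟩ := Multiset.mem_map.mp hvR
  have hv' : v' = v := hq2
  subst hv'
  by_cases hq1 : Q1 = P1
  · subst hq1
    exact hqN
  · have hqQF : Q1 ∈ F := by
      rw [← hfst]
      exact Multiset.mem_map_of_mem _ hqN
    have hqcard : Q1.card = k := (hprop _ hqN).1
    have hrk := hmax Q1 hqQF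
    have hpne : ((P1, u) : Finset ℕ × ℕ) ≠ (Q1, v) := by
      intro h
      exact hq1 (congrArg Prod.fst h).symm
    obtain ⟨a0, ha1, hak, halt, hab⟩ := rk_extract hpcard hqcard hrk (fun h => hq1 h.symm)
    have hcomp : CompatP k (Q1, v) (P1, u) := compatP_symm k (multiset_pairwise_forall
      (compatP_symm k) hpw hpN hqN hpne)
    have harith := compat_nec hqcard hpcard ((hprop _ hqN).2) ((hprop _ hpN).2)
      ha1 hak halt (fun c hc1 hc2 => (hab c hc1 hc2).symm) hcomp
    -- harith : u ≤ v ∨ (a0 = k ∧ v ≤ nth P1 k)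
    rcases harith with h | ⟨hk', hle⟩
    · have h1 : v ≤ u := hvmin u (by rw [← hsnd]; exact Multiset.mem_map_of_mem _ hpN) hptop
      have : u = v := le_antisymm h h1
      rw [← this]
      exact hpN
    · exfalso
      rw [topOf, hpcard] at hvgt
      omega


/-- uniqueness of valid extensions -/
lemma matching_unique {k : ℕ} : ∀ (n : ℕ) (F : Multiset (Finset ℕ)) (R : Multiset ℕ)
    (N₁ N₂ : Multiset (Finset ℕ × ℕ)), Multiset.card N₁ = n →
    VE k F R N₁ → VE k F R N₂ → N₁ = N₂ := by
  intro n
  induction n with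
  | zero =>
    intro F R N₁ N₂ hcard h1 h2
    have hN0 : N₁ = 0 := Multiset.card_eq_zero.mp hcard
    have hF : F = 0 := by
      rw [← h1.1, hN0]
      simp
    have : Multiset.card N₂ = 0 := by
      have := congrArg Multiset.card h2.1
      rw [Multiset.card_map, hF] at this
      simpa using this
    rw [hN0, Multiset.card_eq_zero.mp this]
  | succ n ih =>
    intro F R N₁ N₂ hcard h1 h2
    rcases Nat.eq_zero_or_pos k with rfl | hk
    · -- k = 0 : all first components are ∅, so N is determined by R
      have e1 : N₁ = R.map (fun v => ((∅ : Finset ℕ), v)) := by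
        rw [← h1.2.1]
        exact fst_const_eq ∅ (fun p hp => Finset.card_eq_zero.mp ((h1.2.2.1 p hp).1))
      have e2 : N₂ = R.map (fun v => ((∅ : Finset ℕ), v)) := by
        rw [← h2.2.1]
        exact fst_const_eq ∅ (fun p hp => Finset.card_eq_zero.mp ((h2.2.2.1 p hp).1))
      rw [e1, e2]
    · -- k ≥ 1 : find the maximal column and its minimal value
      have hFne : F ≠ 0 := by
        intro h
        have := congrArg Multiset.card h1.1
        rw [Multiset.card_map, hcard, h] at this
        simp at this
      set l := F.sort rk with hl
      have hlne : l ≠ [] := by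
        intro h
        apply hFne
        rw [← Multiset.sort_eq F rk, ← hl, h]
        rfl
      obtain ⟨Pm, t, hlt⟩ := List.exists_cons_of_ne_nil hlne
      have hsorted : List.Pairwise rk l := Multiset.pairwise_sort F rk
      have hPmF : Pm ∈ F := by
        rw [← Multiset.sort_eq F rk, ← hl, hlt]
        exact Multiset.mem_coe.mpr List.mem_cons_self
      have hmax : ∀ Q ∈ F, rk Pm Q := by
        intro Q hQ
        rw [← Multiset.sort_eq F rk, ← hl, hlt] at hQ
        rcases List.mem_cons.mp (Multiset.mem_coe.mp hQ) with rfl | h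
        · exact (rk_total Q Q).elim id id
        · rw [hlt] at hsorted
          exact (List.pairwise_cons.mp hsorted).1 Q h
      have hmem1 := ve_mem_pair hk h1 hPmF hmax
      have hmem2 := ve_mem_pair hk h2 hPmF hmax
      set pr : Finset ℕ × ℕ := (Pm, minAbove R (topOf Pm)) with hpr
      obtain ⟨N₁', hN1⟩ := Multiset.exists_cons_of_mem hmem1
      obtain ⟨N₂', hN2⟩ := Multiset.exists_cons_of_mem hmem2
      have hVE1' : VE k (F.erase Pm) (R.erase pr.2) N₁' := by
        refine ⟨?_, ?_, ?_, ?_⟩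
        · have := h1.1
          rw [hN1, Multiset.map_cons] at this
          rw [← this, Multiset.erase_cons_head]
        · have := h1.2.1
          rw [hN1, Multiset.map_cons] at this
          rw [← this, Multiset.erase_cons_head]
        · intro p hp
          exact h1.2.2.1 p (by rw [hN1]; exact Multiset.mem_cons_of_mem hp)
        · have := h1.2.2.2
          rw [hN1] at this
          exact (multiset_pairwise_cons (compatP_symm k)).mp this |>.2
      have hVE2' : VE k (F.erase Pm) (R.erase pr.2) N₂' := by
        refine ⟨?_, ?_, ?_, ?_⟩
        · have := h2.1
          rw [hN2, Multiset.map_cons] at this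
          rw [← this, Multiset.erase_cons_head]
        · have := h2.2.1
          rw [hN2, Multiset.map_cons] at this
          rw [← this, Multiset.erase_cons_head]
        · intro p hp
          exact h2.2.2.1 p (by rw [hN2]; exact Multiset.mem_cons_of_mem hp)
        · have := h2.2.2.2
          rw [hN2] at this
          exact (multiset_pairwise_cons (compatP_symm k)).mp this |>.2
      have hcard' : Multiset.card N₁' = n := by
        have := hcard
        rw [hN1, Multiset.card_cons] at this
        omega
      rw [hN1, hN2, ih (F.erase Pm) (R.erase pr.2) N₁' N₂' hcard' hVE1' hVE2']

/-! ### the greedy construction -/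

noncomputable def greedy : List (Finset ℕ) → Multiset ℕ → List (Finset ℕ × ℕ)
  | [], _ => []
  | P :: l, R => (P, minAbove R (topOf P)) :: greedy l (R.erase (minAbove R (topOf P)))

lemma greedy_spec {k : ℕ} (hk : 1 ≤ k) :
    ∀ (l : List (Finset ℕ)) (R : Multiset ℕ),
    (∀ P ∈ l, P.card = k) → List.Pairwise rk l → Multiset.card R = l.length →
    (∀ i (hi : i < l.length), i + 1 ≤ Multiset.card (R.filter (topOf l[i] < ·))) →
    (greedy l R).map Prod.fst = l ∧
    ((greedy l R).map Prod.snd : Multiset ℕ) = R ∧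
    (∀ p ∈ greedy l R, p.1.card = k ∧ ∀ x ∈ p.1, x < p.2) ∧
    List.Pairwise (CompatP k) (greedy l R) := by
  intro l
  induction l with
  | nil =>
    intro R hcards hsort hlen hH
    refine ⟨rfl, ?_, by simp [greedy], by simp [greedy]⟩
    have : R = 0 := Multiset.card_eq_zero.mp (by simpa using hlen)
    simp [greedy, this]
  | cons P l ih =>
    intro R hcards hsort hlen hH
    have hfeas : ∃ x ∈ R, topOf P < x := by
      have h0 := hH 0 (by simp)
      rw [List.getElem_cons_zero] at h0
      have : 0 < Multiset.card (R.filter (topOf P < ·)) := by omega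
      obtain ⟨x, hx⟩ := Multiset.card_pos_iff_exists_mem.mp this
      rw [Multiset.mem_filter] at hx
      exact ⟨x, hx.1, hx.2⟩
    obtain ⟨hvR, hvgt, hvmin⟩ := minAbove_spec hfeas
    set v := minAbove R (topOf P) with hv
    have hR : v ::ₘ R.erase v = R := Multiset.cons_erase hvR
    have hlen' : Multiset.card (R.erase v) = l.length := by
      have hlen2 : Multiset.card R = l.length + 1 := by simpa using hlen
      rw [Multiset.card_erase_of_mem hvR, hlen2]
      rfl
    have hH' : ∀ i (hi : i < l.length),
        i + 1 ≤ Multiset.card ((R.erase v).filter (topOf l[i] < ·)) := by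
      intro i hi
      have h1 := hH (i+1) (by simp; omega)
      rw [List.getElem_cons_succ] at h1
      have h2 : Multiset.card (R.filter (topOf l[i] < ·)) ≤
          Multiset.card ((R.erase v).filter (topOf l[i] < ·)) + 1 := by
        conv_lhs => rw [← hR]
        rw [Multiset.filter_cons]
        split_ifs with h
        · simp
        · simp
      omega
    obtain ⟨ihfst, ihsnd, ihprop, ihpw⟩ := ih (R.erase v)
      (fun Q hQ => hcards Q (List.mem_cons_of_mem _ hQ))
      (List.Pairwise.sublist (List.sublist_cons_self P l) hsort) hlen' hH'
    have hPcard : P.card = k := hcards P List.mem_cons_self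
    refine ⟨?_, ?_, ?_, ?_⟩
    · rw [greedy, List.map_cons, ihfst]
    · rw [greedy, List.map_cons]
      change v ::ₘ ((greedy l (R.erase v)).map Prod.snd : Multiset ℕ) = R
      rw [ihsnd, hR]
    · intro p hp
      rw [greedy, List.mem_cons] at hp
      rcases hp with rfl | hp
      · refine ⟨hPcard, ?_⟩
        intro x hx
        exact lt_of_le_of_lt (le_topOf hx) hvgt
      · exact ihprop p hp
    · rw [greedy, List.pairwise_cons]
      refine ⟨?_, ihpw⟩
      intro q hq
      have hq1l : q.1 ∈ l := by
        rw [← ihfst]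
        exact List.mem_map_of_mem hq
      have hq2R : q.2 ∈ R.erase v := by
        rw [← ihsnd]
        exact Multiset.mem_coe.mpr (List.mem_map_of_mem hq)
      have hqprop := ihprop q hq
      have hQcard : q.1.card = k := hqprop.1
      have hrkPQ : rk P q.1 := (List.pairwise_cons.mp hsort).1 q.1 hq1l
      show Compat k P v q.1 q.2
      by_cases hPQ : P = q.1
      · rw [hPQ]
        exact compat_of_eq v q.2
      · obtain ⟨a0, ha1, hak, halt, hab⟩ := rk_extract hPcard hQcard hrkPQ hPQ
        have harith : v ≤ q.2 ∨ (a0 = k ∧ q.2 ≤ nth P k) := by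
          by_cases htw : topOf P < q.2
          · exact Or.inl (hvmin q.2 (Multiset.mem_of_mem_erase hq2R) htw)
          · rw [topOf, hPcard] at htw
            push_neg at htw
            refine Or.inr ⟨?_, htw⟩
            by_contra ha0k
            have ha0k' : a0 < k := lt_of_le_of_ne hak ha0k
            have htops : nth P k = nth q.1 k := hab k ha0k' (le_refl _)
            have : nth q.1 k < q.2 := hqprop.2 _ (nth_mem q.1 k hk (by omega))
            omega
        exact compat_symm (compat_suf hQcard hPcard hqprop.2
          (fun x hx => lt_of_le_of_lt (le_topOf hx) hvgt) ha1 hak halt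
          (fun c hc1 hc2 => (hab c hc1 hc2).symm) harith)

/-! ### assembling the main induction -/

lemma list_pairwise_of_forall {α : Type*} {r : α → α → Prop} (h : ∀ x y, r x y) :
    ∀ l : List α, List.Pairwise r l
  | [] => List.Pairwise.nil
  | a :: l => List.Pairwise.cons (fun y _ => h a y) (list_pairwise_of_forall h l)

lemma nth_singleton (v : ℕ) : nth ({v} : Finset ℕ) 1 = v := by
  rw [nth, Finset.sort_singleton]
  rfl

lemma rk_top_le {k : ℕ} {P Q : Finset ℕ} (hP : P.card = k) (hQ : Q.card = k)
    (h : rk P Q) : topOf Q ≤ topOf P := by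
  rcases h with h | ⟨hc, h⟩
  · omega
  · rcases h with rfl | ⟨a, ha1, halt, hab⟩
    · exact le_refl _
    · have hak : a ≤ k := by
        by_contra h'
        rw [nth_eq_zero P a (by omega)] at halt
        omega
      rw [topOf, topOf, hP, hQ]
      rcases eq_or_lt_of_le hak with rfl | h'
      · exact le_of_lt halt
      · rw [hab k h']

lemma card_filter_coe_eq_countP (L : List ℕ) (p : ℕ → Prop) [DecidablePred p] :
    Multiset.card ((L : Multiset ℕ).filter p) = L.countP (fun x => decide (p x)) := by
  rw [← Multiset.countP_eq_card_filter, Multiset.coe_countP]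

lemma card_filter_lt_le (l : List (Finset ℕ)) (g : Finset ℕ → ℕ) (i : ℕ) (hi : i < l.length)
    (hdec : ∀ j (hj : j < l.length), j ≤ i → g l[i] ≤ g l[j]) :
    Multiset.card (((l.map g : List ℕ) : Multiset ℕ).filter (· < g l[i])) ≤
      l.length - (i+1) := by
  rw [card_filter_coe_eq_countP]
  obtain ⟨t, ht⟩ : ∃ t, g l[i] = t := ⟨_, rfl⟩
  rw [ht]
  conv_lhs => rw [← List.take_append_drop (i+1) (l.map g)]
  rw [List.countP_append]
  have h1 : (List.take (i+1) (l.map g)).countP (fun x => decide (x < t)) = 0 := by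
    rw [List.countP_eq_zero]
    intro x hx
    rcases List.mem_iff_getElem.mp hx with ⟨j, hj, rfl⟩
    have hj1 : j < (l.map g).length := lt_of_lt_of_le hj (by simp [List.length_take])
    have hj2 : j ≤ i := by simp [List.length_take] at hj; omega
    have hj3 : j < l.length := by simpa using hj1
    rw [List.getElem_take, List.getElem_map]
    simp only [decide_eq_true_eq, not_lt]
    rw [← ht]
    exact hdec j hj3 hj2
  have h2 : (List.drop (i+1) (l.map g)).countP (fun x => decide (x < t)) ≤
      (List.drop (i+1) (l.map g)).length := List.countP_le_length
  rw [h1]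
  simp only [List.length_drop, List.length_map] at h2 ⊢
  omega

/-- validity of a decomposition -/
def Valid (k m : ℕ) (R : ℕ → Multiset ℕ) (M : Multiset (Finset ℕ)) : Prop :=
  Multiset.card M = m ∧ (∀ S ∈ M, S.card = k) ∧ M.Pairwise (Noncrossing k) ∧
  (∀ a, 1 ≤ a → a ≤ k → M.map (fun S => nth S a) = R a)

lemma noncrossing_symmetric (k : ℕ) : Symmetric (Noncrossing k) :=
  fun _ _ h => noncrossing_symm h

theorem main_induction (k : ℕ) : ∀ (m : ℕ) (R : ℕ → Multiset ℕ),
    (∀ a, 1 ≤ a → a ≤ k → Multiset.card (R a) = m) →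
    (∀ a t, 1 ≤ a → a + 1 ≤ k →
      Multiset.card ((R (a+1)).filter (· ≤ t)) ≤ Multiset.card ((R a).filter (· < t))) →
    ∃! M, Valid k m R M := by
  induction k with
  | zero =>
    intro m R hcard hdom
    refine ⟨Multiset.replicate m ∅, ⟨?_, ?_, ?_, ?_⟩, ?_⟩
    · exact Multiset.card_replicate m ∅
    · intro S hS
      rw [Multiset.eq_of_mem_replicate hS]
      rfl
    · exact ⟨List.replicate m (∅ : Finset ℕ), (Multiset.coe_replicate m (∅ : Finset ℕ)).symm,
        List.pairwise_replicate.mpr (Or.inr (noncrossing_refl 0 ∅))⟩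
    · intro a h1 h2
      omega
    · intro M hM
      exact Multiset.eq_replicate.mpr ⟨hM.1,
        fun S hS => Finset.card_eq_zero.mp (hM.2.1 S hS)⟩
  | succ k ih =>
    intro m R hcard hdom
    rcases Nat.eq_zero_or_pos k with rfl | hk
    · -- one-row case
      refine ⟨(R 1).map (fun v => {v}), ⟨?_, ?_, ?_, ?_⟩, ?_⟩
      · rw [Multiset.card_map]
        exact hcard 1 (le_refl _) (le_refl _)
      · intro S hS
        obtain ⟨v, _, rfl⟩ := Multiset.mem_map.mp hS
        exact Finset.card_singleton v
      · obtain ⟨L, hL⟩ := Quotient.exists_rep (R 1)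
        refine ⟨L.map (fun v => {v}), ?_, list_pairwise_of_forall ?_ _⟩
        · rw [← hL]
          exact (Multiset.map_coe _ L).symm ▸ rfl
        · intro I J a b h1 h2 h3
          omega
      · intro a h1 h2
        have ha : a = 1 := by omega
        subst ha
        rw [Multiset.map_map]
        have hps : ∀ v ∈ R 1, ((fun S => nth S 1) ∘ fun v => ({v} : Finset ℕ)) v = id v :=
          fun v _ => nth_singleton v
        rw [Multiset.map_congr rfl hps, Multiset.map_id]
      · intro M hM
        have h1 : ∀ S ∈ M, S = {nth S 1} := by
          intro S hS
          obtain ⟨x, rfl⟩ := Finset.card_eq_one.mp (hM.2.1 S hS)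
          rw [nth_singleton]
        calc M = M.map (fun S => {nth S 1}) := by
              conv_lhs => rw [← Multiset.map_id M]
              exact Multiset.map_congr rfl h1
          _ = (M.map (fun S => nth S 1)).map (fun v => {v}) := by
              rw [Multiset.map_map]
              rfl
          _ = (R 1).map (fun v => {v}) := by
              rw [hM.2.2.2 1 (le_refl _) (le_refl _)]
    · -- main step, k ≥ 1
      obtain ⟨M'', hM'', huniq''⟩ := ih m R
        (fun a h1 h2 => hcard a h1 (by omega))
        (fun a t h1 h2 => hdom a t h1 (by omega))
      obtain ⟨hM''card, hM''cards, hM''pw, hM''rows⟩ := hM''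
      set l := M''.sort rk with hldef
      have hlco : (l : Multiset (Finset ℕ)) = M'' := Multiset.sort_eq M'' rk
      have hlsort : List.Pairwise rk l := Multiset.pairwise_sort M'' rk
      have hllen : l.length = m := by
        rw [← Multiset.coe_card, hlco]
        exact hM''card
      have hlcards : ∀ P ∈ l, P.card = k := fun P hP =>
        hM''cards P (by rw [← hlco]; exact Multiset.mem_coe.mpr hP)
      have hrowk : (l.map (fun P => nth P k) : Multiset ℕ) = R k := by
        rw [← Multiset.map_coe, hlco]
        exact hM''rows k hk (by omega)
      have hRk1card : Multiset.card (R (k+1)) = m := hcard (k+1) (by omega) (le_refl _)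
      -- the H-condition for the greedy construction
      have hH : ∀ i (hi : i < l.length),
          i + 1 ≤ Multiset.card ((R (k+1)).filter (topOf l[i] < ·)) := by
        intro i hi
        have hicard : l[i].card = k := hlcards _ (List.getElem_mem hi)
        obtain ⟨t, ht⟩ : ∃ t, topOf l[i] = t := ⟨_, rfl⟩
        have hdec : ∀ j (hj : j < l.length), j ≤ i → topOf l[i] ≤ topOf l[j] := by
          intro j hj hji
          rcases eq_or_lt_of_le hji with rfl | h'
          · exact le_refl _
          · exact rk_top_le (hlcards _ (List.getElem_mem hj)) hicard
              (List.pairwise_iff_getElem.mp hlsort j i hj hi h')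
        have c2 : Multiset.card (((l.map topOf : List ℕ) : Multiset ℕ).filter (· < topOf l[i]))
            ≤ l.length - (i+1) := card_filter_lt_le l topOf i hi hdec
        have hmapeq : ((l.map topOf : List ℕ) : Multiset ℕ) = R k := by
          rw [← hrowk]
          congr 1
          apply List.map_congr_left
          intro P hP
          rw [topOf, hlcards P hP]
        rw [hmapeq] at c2
        have c1 : Multiset.card ((R (k+1)).filter (· ≤ t)) ≤
            Multiset.card ((R k).filter (· < t)) := hdom k t hk (le_refl _)
        rw [← ht] at c1
        have c3 : Multiset.card ((R (k+1)).filter (topOf l[i] < ·)) +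
            Multiset.card ((R (k+1)).filter (· ≤ topOf l[i])) = m := by
          have hsplit := congrArg Multiset.card
            (Multiset.filter_add_not (topOf l[i] < ·) (R (k+1)))
          rw [Multiset.card_add] at hsplit
          have hfc : (R (k+1)).filter (fun a => ¬ topOf l[i] < a) =
              (R (k+1)).filter (· ≤ topOf l[i]) :=
            Multiset.filter_congr (fun x _ => by omega)
          rw [hfc, hRk1card] at hsplit
          exact hsplit
        rw [hllen] at c2
        omega
      obtain ⟨hgfst, hgsnd, hgprop, hgpw⟩ := greedy_spec hk l (R (k+1)) hlcards
        (hlsort : List.Pairwise rk l) (by rw [hRk1card, hllen]) hH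
      set Nl := greedy l (R (k+1)) with hNl
      have hNlen : Nl.length = m := by
        rw [← hllen, ← hgfst, List.length_map]
      -- pairwise noncrossing at level k on the list l
      have hlpwnc : List.Pairwise (Noncrossing k) l := by
        rw [← @Multiset.pairwise_coe_iff_pairwise _ _ ⟨fun _ _ h => noncrossing_symmetric k h⟩ _, hlco]
        exact hM''pw
      have hNlpwnc : List.Pairwise (fun p q => Noncrossing k p.1 q.1) Nl := by
        have := hlpwnc
        rw [← hgfst, List.pairwise_map] at this
        exact this
      -- the constructed decomposition
      set ext2 : Finset ℕ × ℕ → Finset ℕ := fun p => insert p.2 p.1 with hext2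
      set M₀ : Multiset (Finset ℕ) := ((Nl.map ext2 : List (Finset ℕ)) : Multiset (Finset ℕ))
        with hM₀
      have hM₀valid : Valid (k+1) m R M₀ := by
        refine ⟨?_, ?_, ?_, ?_⟩
        · rw [hM₀, Multiset.coe_card, List.length_map, hNlen]
        · intro S hS
          obtain ⟨p, hp, rfl⟩ := List.mem_map.mp (Multiset.mem_coe.mp hS)
          exact card_insert_top (hgprop p hp).1 (hgprop p hp).2
        · refine ⟨Nl.map ext2, rfl, ?_⟩
          rw [List.pairwise_map]
          have hcomb := List.Pairwise.and hNlpwnc hgpw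
          refine hcomb.imp_of_mem ?_
          intro p q hp hq hpq
          exact (noncrossing_split (hgprop p hp).1 (hgprop q hq).1
            (hgprop p hp).2 (hgprop q hq).2).mpr ⟨hpq.1, hpq.2⟩
        · intro a h1 h2
          rcases eq_or_lt_of_le h2 with h2' | h2'
          · -- a = k+1 : the new row
            subst h2'
            rw [hM₀, ← Multiset.map_coe, Multiset.map_map]
            have hptw : ∀ p ∈ (Nl : Multiset (Finset ℕ × ℕ)),
                ((fun S => nth S (k+1)) ∘ ext2) p = Prod.snd p := by
              intro p hp
              have hp' := Multiset.mem_coe.mp hp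
              exact nth_insert_top (hgprop p hp').1 (hgprop p hp').2
            rw [Multiset.map_congr rfl hptw, Multiset.map_coe, hgsnd]
          · -- a ≤ k : inherited rows
            have hak : a ≤ k := by omega
            rw [hM₀, ← Multiset.map_coe, Multiset.map_map]
            have hptw : ∀ p ∈ (Nl : Multiset (Finset ℕ × ℕ)),
                ((fun S => nth S a) ∘ ext2) p = ((fun P => nth P a) ∘ Prod.fst) p := by
              intro p hp
              have hp' := Multiset.mem_coe.mp hp
              exact nth_insert_of_le (hgprop p hp').1 (hgprop p hp').2 h1 hak
            rw [Multiset.map_congr rfl hptw, ← Multiset.map_map, Multiset.map_coe, hgfst,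
              hlco]
            exact hM''rows a h1 hak
      refine ⟨M₀, hM₀valid, ?_⟩
      -- uniqueness
      intro M hM
      obtain ⟨hMcard, hMcards, hMpw, hMrows⟩ := hM
      obtain ⟨lM, hlM, hlMpw⟩ := hMpw
      -- the dropped decomposition
      have hdropvalid : Valid k m R (M.map (fun S => posSlice S 1 k)) := by
        refine ⟨?_, ?_, ?_, ?_⟩
        · rw [Multiset.card_map]; exact hMcard
        · intro P hP
          obtain ⟨S, hS, rfl⟩ := Multiset.mem_map.mp hP
          exact dropTop_card (hMcards S hS)
        · refine ⟨lM.map (fun S => posSlice S 1 k), by rw [hlM, Multiset.map_coe], ?_⟩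
          rw [List.pairwise_map]
          refine hlMpw.imp_of_mem ?_
          intro S U hSl hUl hncSU
          have hScard : S.card = k + 1 := hMcards S (by rw [hlM]; exact Multiset.mem_coe.mpr hSl)
          have hUcard : U.card = k + 1 := hMcards U (by rw [hlM]; exact Multiset.mem_coe.mpr hUl)
          have hS' : S = insert (nth S (k+1)) (posSlice S 1 k) := (insert_dropTop hScard).symm
          have hU' : U = insert (nth U (k+1)) (posSlice U 1 k) := (insert_dropTop hUcard).symm
          rw [hS', hU'] at hncSU
          exact ((noncrossing_split (dropTop_card hScard) (dropTop_card hUcard)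
            (dropTop_lt hScard) (dropTop_lt hUcard)).mp hncSU).1
        · intro a h1 h2
          have hptw : ∀ S ∈ M, ((fun S => nth S a) ∘ (fun S => posSlice S 1 k)) S =
              (fun S => nth S a) S := by
            intro S hS
            exact dropTop_nth (hMcards S hS) h1 h2
          rw [Multiset.map_map]
          rw [Multiset.map_congr rfl hptw]
          exact hMrows a h1 (by omega)
      have hdrop_eq : M.map (fun S => posSlice S 1 k) = M'' := huniq'' _ hdropvalid
      -- the pair version of M
      set NM : Multiset (Finset ℕ × ℕ) := M.map (fun S => (posSlice S 1 k, nth S (k+1)))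
        with hNM
      have hNMve : VE k M'' (R (k+1)) NM := by
        refine ⟨?_, ?_, ?_, ?_⟩
        · rw [hNM, Multiset.map_map]
          exact hdrop_eq
        · rw [hNM, Multiset.map_map]
          exact hMrows (k+1) (by omega) (le_refl _)
        · intro p hp
          obtain ⟨S, hS, rfl⟩ := Multiset.mem_map.mp hp
          exact ⟨dropTop_card (hMcards S hS), dropTop_lt (hMcards S hS)⟩
        · rw [hNM, hlM, Multiset.map_coe]
          rw [@Multiset.pairwise_coe_iff_pairwise _ _ ⟨fun _ _ h => compatP_symm k h⟩ _]
          rw [List.pairwise_map]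
          refine hlMpw.imp_of_mem ?_
          intro S U hSl hUl hncSU
          have hScard : S.card = k + 1 := hMcards S (by rw [hlM]; exact Multiset.mem_coe.mpr hSl)
          have hUcard : U.card = k + 1 := hMcards U (by rw [hlM]; exact Multiset.mem_coe.mpr hUl)
          have hS' : S = insert (nth S (k+1)) (posSlice S 1 k) := (insert_dropTop hScard).symm
          have hU' : U = insert (nth U (k+1)) (posSlice U 1 k) := (insert_dropTop hUcard).symm
          rw [hS', hU'] at hncSU
          exact ((noncrossing_split (dropTop_card hScard) (dropTop_card hUcard)
            (dropTop_lt hScard) (dropTop_lt hUcard)).mp hncSU).2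
      have hNlve : VE k M'' (R (k+1)) (Nl : Multiset (Finset ℕ × ℕ)) := by
        refine ⟨?_, ?_, ?_, ?_⟩
        · rw [Multiset.map_coe, hgfst, hlco]
        · rw [Multiset.map_coe, hgsnd]
        · intro p hp
          exact hgprop p (Multiset.mem_coe.mp hp)
        · rw [@Multiset.pairwise_coe_iff_pairwise _ _ ⟨fun _ _ h => compatP_symm k h⟩ _]
          exact hgpw
      have hNMcard : Multiset.card NM = m := by
        rw [hNM, Multiset.card_map]
        exact hMcard
      have heq := matching_unique m M'' (R (k+1)) NM (Nl : Multiset (Finset ℕ × ℕ))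
        hNMcard hNMve hNlve
      -- recover M from NM
      have hMrec : M = NM.map ext2 := by
        rw [hNM, Multiset.map_map]
        conv_lhs => rw [← Multiset.map_id M]
        apply Multiset.map_congr rfl
        intro S hS
        exact (insert_dropTop (hMcards S hS)).symm
      rw [hMrec, heq, hM₀, Multiset.map_coe]

end NCD

/-- `T` is a rectangular semistandard Young tableau with entries in `[n]`. -/
def IsSSYT {k m : ℕ} (n : ℕ) (T : Fin k → Fin m → ℕ) : Prop :=
  (∀ i j, T i j ∈ Finset.Icc 1 n) ∧
  (∀ i (j j' : Fin m), j ≤ j' → T i j ≤ T i j') ∧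
  (∀ (i i' : Fin k) j, i < i' → T i j < T i' j)

/-- Every rectangular SSYT is the union of a unique multiset of pairwise noncrossing
one-column tableaux. -/
theorem unique_noncrossing_decomposition
    (k m n : ℕ) (T : Fin k → Fin m → ℕ) (hT : IsSSYT n T) :
    ∃! M : Multiset (Finset ℕ),
      Multiset.card M = m ∧
      (∀ S ∈ M, S.card = k ∧ S ⊆ Finset.Icc 1 n) ∧
      M.Pairwise (Noncrossing k) ∧
      (∀ a : Fin k,
        (Finset.univ.val.map (T a)) = M.map (fun S => nth S ((a : ℕ) + 1))) := by
  classical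
  set R : ℕ → Multiset ℕ := fun a =>
    if h : a - 1 < k then Finset.univ.val.map (T ⟨a - 1, h⟩) else 0 with hR
  have hcarduniv : Multiset.card (Finset.univ.val : Multiset (Fin m)) = m := by
    have : (Finset.univ : Finset (Fin m)).card = m := by simp
    exact this
  have hcard : ∀ a, 1 ≤ a → a ≤ k → Multiset.card (R a) = m := by
    intro a h1 h2
    rw [hR]
    simp only
    rw [dif_pos (by omega : a - 1 < k), Multiset.card_map]
    exact hcarduniv
  have hdom : ∀ a t, 1 ≤ a → a + 1 ≤ k →
      Multiset.card ((R (a+1)).filter (· ≤ t)) ≤ Multiset.card ((R a).filter (· < t)) := by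
    intro a t h1 h2
    rw [hR]
    simp only
    rw [dif_pos (by omega : a + 1 - 1 < k), dif_pos (by omega : a - 1 < k)]
    rw [← Multiset.countP_eq_card_filter, ← Multiset.countP_eq_card_filter,
      Multiset.countP_map, Multiset.countP_map]
    apply Multiset.card_le_card
    apply Multiset.monotone_filter_right
    intro j hj
    have hlt : (⟨a - 1, by omega⟩ : Fin k) < ⟨a + 1 - 1, by omega⟩ := by
      rw [Fin.mk_lt_mk]
      omega
    have := hT.2.2 ⟨a - 1, by omega⟩ ⟨a + 1 - 1, by omega⟩ j hlt
    omega
  obtain ⟨M₀, hM₀, huniq⟩ := NCD.main_induction k m R hcard hdom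
  have hiff : ∀ M : Multiset (Finset ℕ),
      (Multiset.card M = m ∧
      (∀ S ∈ M, S.card = k ∧ S ⊆ Finset.Icc 1 n) ∧
      M.Pairwise (Noncrossing k) ∧
      (∀ a : Fin k,
        (Finset.univ.val.map (T a)) = M.map (fun S => nth S ((a : ℕ) + 1)))) ↔
      NCD.Valid k m R M := by
    intro M
    constructor
    · rintro ⟨h1, h2, h3, h4⟩
      refine ⟨h1, fun S hS => (h2 S hS).1, h3, ?_⟩
      intro p hp1 hp2
      rw [hR]
      simp only
      rw [dif_pos (by omega : p - 1 < k)]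
      have h5 := h4 ⟨p - 1, by omega⟩
      have hcoe : ((⟨p - 1, by omega⟩ : Fin k) : ℕ) + 1 = p := by simp; omega
      rw [hcoe] at h5
      exact h5.symm
    · rintro ⟨h1, h2, h3, h4⟩
      have hIcc : ∀ S ∈ M, S ⊆ Finset.Icc 1 n := by
        intro S hS x hx
        have hxcard := h2 S hS
        have hp1 : 1 ≤ NCD.pos S x := NCD.pos_pos S x hx
        have hp2 : NCD.pos S x ≤ k := by
          rw [← hxcard]
          exact NCD.pos_le_card S x
        have hx' : x = nth S (NCD.pos S x) := (NCD.nth_pos_eq S x hx).symm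
        have hmem : nth S (NCD.pos S x) ∈ M.map (fun U => nth U (NCD.pos S x)) :=
          Multiset.mem_map_of_mem _ hS
        rw [h4 (NCD.pos S x) hp1 hp2, hR] at hmem
        simp only at hmem
        rw [dif_pos (by omega : NCD.pos S x - 1 < k)] at hmem
        obtain ⟨j, _, hj⟩ := Multiset.mem_map.mp hmem
        rw [hx', ← hj]
        exact hT.1 _ j
      refine ⟨h1, fun S hS => ⟨h2 S hS, hIcc S hS⟩, h3, ?_⟩
      intro a
      have h5 := h4 ((a : ℕ) + 1) (by omega) (by omega)
      rw [hR] at h5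
      simp only at h5
      rw [dif_pos (by omega : (a : ℕ) + 1 - 1 < k)] at h5
      have hfin : (⟨(a : ℕ) + 1 - 1, by omega⟩ : Fin k) = a := by
        apply Fin.ext
        simp
      rw [hfin] at h5
      exact h5.symm
  exact ⟨M₀, (hiff M₀).mpr hM₀, fun y hy => huniq y ((hiff y).mp hy)⟩
end

section
/- Let T_1, T_2 be one-column tableaux (k-subsets of [n]) that are noncrossing and not weakly separated. Then for any pair of one-column tableaux S_1, S_2 with S_1 ∪ S_2 = T_1 ∪ T_2 (equal row-wise multiset unions), the pair S_1, S_2 is not weakly separated. -/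
open Finset

def rk (I : Finset ℕ) (x : ℕ) : ℕ := (I.filter (· ≤ x)).card

lemma nth_mem {I : Finset ℕ} {a : ℕ} (h1 : 1 ≤ a) (h2 : a ≤ I.card) : nth I a ∈ I := by
  have hlen : a - 1 < (I.sort (· ≤ ·)).length := by
    rw [Finset.length_sort]; omega
  rw [nth, List.getD_eq_get _ _ ⟨a - 1, hlen⟩]
  exact (Finset.mem_sort _).1 (List.get_mem _ _)

lemma nth_lt_nth {I : Finset ℕ} {a b : ℕ} (h1 : 1 ≤ a) (h2 : a < b) (h3 : b ≤ I.card) :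
    nth I a < nth I b := by
  have hb : b - 1 < (I.sort (· ≤ ·)).length := by rw [Finset.length_sort]; omega
  have ha : a - 1 < (I.sort (· ≤ ·)).length := by rw [Finset.length_sort]; omega
  rw [nth, nth, List.getD_eq_get _ _ ⟨a - 1, ha⟩, List.getD_eq_get _ _ ⟨b - 1, hb⟩]
  exact I.sortedLT_sort.strictMono_get (by simp [Fin.lt_def]; omega)

lemma nth_surj {I : Finset ℕ} {x : ℕ} (hx : x ∈ I) :
    ∃ a, 1 ≤ a ∧ a ≤ I.card ∧ nth I a = x := by
  have hx' : x ∈ I.sort (· ≤ ·) := (Finset.mem_sort _).2 hx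
  obtain ⟨⟨i, hi⟩, hget⟩ := List.mem_iff_get.1 hx'
  refine ⟨i + 1, by omega, by rw [Finset.length_sort] at hi; omega, ?_⟩
  rw [nth, Nat.add_sub_cancel, List.getD_eq_get _ _ ⟨i, by simpa using hi⟩]
  exact hget

lemma nth_le_nth {I : Finset ℕ} {a b : ℕ} (h1 : 1 ≤ a) (h2 : a ≤ b) (h3 : b ≤ I.card) :
    nth I a ≤ nth I b := by
  rcases eq_or_lt_of_le h2 with h | h
  · rw [h]
  · exact le_of_lt (nth_lt_nth h1 h h3)

lemma rk_nth {I : Finset ℕ} {a : ℕ} (h1 : 1 ≤ a) (h2 : a ≤ I.card) : rk I (nth I a) = a := by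
  have himg : I.filter (· ≤ nth I a) = (Icc 1 a).image (nth I) := by
    ext x
    simp only [mem_filter, mem_image, mem_Icc]
    constructor
    · rintro ⟨hxI, hxle⟩
      obtain ⟨b, hb1, hb2, rfl⟩ := nth_surj hxI
      refine ⟨b, ⟨hb1, ?_⟩, rfl⟩
      by_contra hba
      exact absurd (nth_lt_nth h1 (by omega) hb2) (by omega)
    · rintro ⟨b, ⟨hb1, hb2⟩, rfl⟩
      exact ⟨nth_mem hb1 (le_trans hb2 h2), nth_le_nth hb1 hb2 h2⟩
  rw [rk, himg, Finset.card_image_of_injOn, Nat.card_Icc]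
  · omega
  · intro x hx y hy hxy
    simp only [Finset.coe_Icc, Set.mem_Icc] at hx hy
    by_contra hne
    rcases lt_or_gt_of_ne hne with h | h
    · exact absurd hxy (ne_of_lt (nth_lt_nth hx.1 h (le_trans hy.2 h2)))
    · exact absurd hxy.symm (ne_of_lt (nth_lt_nth hy.1 h (le_trans hx.2 h2)))

lemma nth_rk {I : Finset ℕ} {x : ℕ} (hx : x ∈ I) :
    1 ≤ rk I x ∧ rk I x ≤ I.card ∧ nth I (rk I x) = x := by
  obtain ⟨a, h1, h2, rfl⟩ := nth_surj hx
  rw [rk_nth h1 h2]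
  exact ⟨h1, h2, rfl⟩

lemma mem_posSlice {I : Finset ℕ} {a b x : ℕ} :
    x ∈ posSlice I a b ↔ ∃ c, 1 ≤ c ∧ c ≤ I.card ∧ a ≤ c ∧ c ≤ b ∧ nth I c = x := by
  rw [posSlice, mem_filter]
  constructor
  · rintro ⟨hxI, h1, h2⟩
    obtain ⟨hc1, hc2, hc3⟩ := nth_rk hxI
    exact ⟨rk I x, hc1, hc2, h1, h2, hc3⟩
  · rintro ⟨c, hc1, hc2, hc3, hc4, rfl⟩
    refine ⟨nth_mem hc1 hc2, ?_, ?_⟩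
    · rw [show (I.filter (· ≤ nth I c)).card = rk I (nth I c) from rfl, rk_nth hc1 hc2]; exact hc3
    · rw [show (I.filter (· ≤ nth I c)).card = rk I (nth I c) from rfl, rk_nth hc1 hc2]; exact hc4

def Disj1 (I J : Finset ℕ) : Prop :=
  ∃ I1 I2 : Finset ℕ, Disjoint I1 I2 ∧ I1 ∪ I2 = I \ J ∧
      allLT I1 (J \ I) ∧ allLT (J \ I) I2

lemma disj1_iff (I J : Finset ℕ) :
    Disj1 I J ↔ ∀ x ∈ I \ J, (∀ y ∈ J \ I, x < y) ∨ (∀ y ∈ J \ I, y < x) := by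
  constructor
  · rintro ⟨I1, I2, hdis, huni, h1, h2⟩ x hx
    rw [← huni, Finset.mem_union] at hx
    rcases hx with hx | hx
    · exact Or.inl (fun y hy => h1 x hx y hy)
    · exact Or.inr (fun y hy => h2 y hy x hx)
  · intro h
    classical
    refine ⟨(I \ J).filter (fun x => ∀ y ∈ J \ I, x < y),
      (I \ J).filter (fun x => ¬ ∀ y ∈ J \ I, x < y), ?_, ?_, ?_, ?_⟩
    · exact Finset.disjoint_filter_filter_not _ _ _
    · exact Finset.filter_union_filter_not_eq _ _
    · intro x hx y hy
      exact (Finset.mem_filter.1 hx).2 y hy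
    · intro y hy x hx
      rw [Finset.mem_filter] at hx
      rcases h x hx.1 with h' | h'
      · exact absurd h' hx.2
      · exact h' y hy

lemma not_disj1 {I J : Finset ℕ} (h : ¬ Disj1 I J) :
    ∃ x ∈ I \ J, ∃ y1 ∈ J \ I, ∃ y2 ∈ J \ I, y1 < x ∧ x < y2 := by
  rw [disj1_iff] at h
  push_neg at h
  obtain ⟨x, hx, ⟨y1, hy1, hxy1⟩, ⟨y2, hy2, hxy2⟩⟩ := h
  have hx1 : x ∉ J := (Finset.mem_sdiff.1 hx).2
  have hne1 : x ≠ y1 := fun h => hx1 (h ▸ (Finset.mem_sdiff.1 hy1).1)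
  have hne2 : x ≠ y2 := fun h => hx1 (h ▸ (Finset.mem_sdiff.1 hy2).1)
  exact ⟨x, hx, y1, hy1, y2, hy2, by omega, by omega⟩

lemma pair_eq {a b c d : ℕ} (h : ({a, b} : Multiset ℕ) = {c, d}) :
    (a = c ∧ b = d) ∨ (a = d ∧ b = c) := by
  have ha : a ∈ ({c, d} : Multiset ℕ) := h ▸ (by simp)
  simp only [Multiset.insert_eq_cons, Multiset.mem_cons, Multiset.mem_singleton] at ha
  rcases ha with rfl | rfl
  · left
    refine ⟨rfl, ?_⟩
    have := congrArg (Multiset.erase · a) h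
    simpa [Multiset.insert_eq_cons] using this
  · right
    refine ⟨rfl, ?_⟩
    have := congrArg (Multiset.erase · a) h
    simp [Multiset.insert_eq_cons] at this
    rcases Decidable.eq_or_ne c a with rfl | hca
    · simp at this; simp [this]
    · rw [Multiset.erase_cons_tail _ hca] at this
      simp at this; simp [this]

section Blocks
variable (T1 T2 : Finset ℕ)

def mrow (r : ℕ) : ℕ := min (nth T1 r) (nth T2 r)
def Mrow (r : ℕ) : ℕ := max (nth T1 r) (nth T2 r)
def bid (r : ℕ) : ℕ := ((Finset.Ico 1 r).filter (fun e => Mrow T1 T2 e < mrow T1 T2 (e + 1))).card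

lemma mrow_comm (r : ℕ) : mrow T1 T2 r = mrow T2 T1 r := min_comm _ _
lemma Mrow_comm (r : ℕ) : Mrow T1 T2 r = Mrow T2 T1 r := max_comm _ _
lemma bid_comm (r : ℕ) : bid T1 T2 r = bid T2 T1 r := by
  unfold bid
  congr 1
  apply Finset.filter_congr
  intro e _
  rw [mrow_comm, Mrow_comm]

variable {k : ℕ}

lemma mrow_le_mrow (hT1c : T1.card = k) (hT2c : T2.card = k) {a b : ℕ} (h1 : 1 ≤ a) (h2 : a ≤ b) (h3 : b ≤ k) :
    mrow T1 T2 a ≤ mrow T1 T2 b :=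
  min_le_min (nth_le_nth h1 h2 (hT1c ▸ h3)) (nth_le_nth h1 h2 (hT2c ▸ h3))

lemma Mrow_le_Mrow (hT1c : T1.card = k) (hT2c : T2.card = k) {a b : ℕ} (h1 : 1 ≤ a) (h2 : a ≤ b) (h3 : b ≤ k) :
    Mrow T1 T2 a ≤ Mrow T1 T2 b :=
  max_le_max (nth_le_nth h1 h2 (hT1c ▸ h3)) (nth_le_nth h1 h2 (hT2c ▸ h3))

lemma bid_mono {a b : ℕ} (h : a ≤ b) : bid T1 T2 a ≤ bid T1 T2 b :=
  Finset.card_le_card (Finset.filter_subset_filter _ (Finset.Ico_subset_Ico le_rfl h))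

lemma bid_sep (hT1c : T1.card = k) (hT2c : T2.card = k) {r r' : ℕ} (h1 : 1 ≤ r) (h3 : r' ≤ k)
    (hb : bid T1 T2 r < bid T1 T2 r') : Mrow T1 T2 r < mrow T1 T2 r' := by
  have hns : ¬ ((Finset.Ico 1 r').filter (fun e => Mrow T1 T2 e < mrow T1 T2 (e + 1)) ⊆
      (Finset.Ico 1 r).filter (fun e => Mrow T1 T2 e < mrow T1 T2 (e + 1))) := by
    intro hsub
    have := Finset.card_le_card hsub
    unfold bid at hb
    omega
  obtain ⟨e, he, hne⟩ := Finset.not_subset.1 hns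
  rw [Finset.mem_filter, Finset.mem_Ico] at he
  have hre : r ≤ e := by
    by_contra hlt
    exact hne (Finset.mem_filter.2 ⟨Finset.mem_Ico.2 ⟨he.1.1, by omega⟩, he.2⟩)
  calc Mrow T1 T2 r ≤ Mrow T1 T2 e := Mrow_le_Mrow T1 T2 hT1c hT2c h1 hre (by omega)
    _ < mrow T1 T2 (e + 1) := he.2
    _ ≤ mrow T1 T2 r' := mrow_le_mrow T1 T2 hT1c hT2c (by omega) (by omega) h3

lemma bid_linked {r r' e : ℕ} (hb : bid T1 T2 r = bid T1 T2 r')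
    (h1 : r ≤ e) (h2 : e < r') (h3 : 1 ≤ r) : mrow T1 T2 (e + 1) ≤ Mrow T1 T2 e := by
  by_contra hlt
  push_neg at hlt
  have hss : (Finset.Ico 1 r).filter (fun e => Mrow T1 T2 e < mrow T1 T2 (e + 1)) ⊂
      (Finset.Ico 1 r').filter (fun e => Mrow T1 T2 e < mrow T1 T2 (e + 1)) := by
    refine Finset.ssubset_iff_of_subset
      (Finset.filter_subset_filter _ (Finset.Ico_subset_Ico le_rfl (by omega))) |>.2 ?_
    refine ⟨e, Finset.mem_filter.2 ⟨Finset.mem_Ico.2 ⟨by omega, h2⟩, hlt⟩, ?_⟩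
    intro hmem
    rw [Finset.mem_filter, Finset.mem_Ico] at hmem
    omega
  have := Finset.card_lt_card hss
  unfold bid at hb
  omega

end Blocks

section Chain
variable {T1 T2 : Finset ℕ} {k : ℕ}

lemma chainM (hT1c : T1.card = k) (hT2c : T2.card = k) (w : ℕ → ℕ)
    (hw : ∀ c, 1 ≤ c → c ≤ k → w c = nth T1 c ∨ w c = nth T2 c)
    (hwmono : ∀ a b, 1 ≤ a → a < b → b ≤ k → w a < w b)
    {r r' : ℕ} (h1 : 1 ≤ r) (hrr : r ≤ r') (hk : r' ≤ k)
    (hb : bid T1 T2 r = bid T1 T2 r') (hM : w r = Mrow T1 T2 r) :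
    w r' = Mrow T1 T2 r' := by
  induction r', hrr using Nat.le_induction with
  | base => exact hM
  | succ e he ih =>
    have hek : e ≤ k := by omega
    have hbe : bid T1 T2 r = bid T1 T2 e := by
      have h1' := bid_mono T1 T2 he
      have h2' := bid_mono T1 T2 (by omega : e ≤ e + 1)
      omega
    have ihe := ih hek hbe
    have hnb : mrow T1 T2 (e + 1) ≤ Mrow T1 T2 e :=
      bid_linked T1 T2 (hbe.symm.trans hb) le_rfl (Nat.lt_succ_self e) (by omega)
    have hlt : Mrow T1 T2 e < w (e + 1) := by
      rw [← ihe]; exact hwmono e (e + 1) (by omega) (by omega) hk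
    have hmM : mrow T1 T2 (e+1) ≤ Mrow T1 T2 (e+1) := by unfold mrow Mrow; omega
    rcases hw (e + 1) (by omega) hk with h | h <;> (unfold mrow Mrow at *; omega)

/-- alignment: on rows with equal block id, a choice pair is aligned with (t,u). -/
lemma aligned_dir (hT1c : T1.card = k) (hT2c : T2.card = k) (s v : ℕ → ℕ)
    (hsv : ∀ c, 1 ≤ c → c ≤ k →
      (s c = nth T1 c ∧ v c = nth T2 c) ∨ (s c = nth T2 c ∧ v c = nth T1 c))
    (hsmono : ∀ a b, 1 ≤ a → a < b → b ≤ k → s a < s b)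
    (hvmono : ∀ a b, 1 ≤ a → a < b → b ≤ k → v a < v b)
    {r r' : ℕ} (h1 : 1 ≤ r) (hrr : r ≤ r') (hk : r' ≤ k)
    (hb : bid T1 T2 r = bid T1 T2 r')
    (hnt : nth T1 r ≠ nth T2 r) (hnt' : nth T1 r' ≠ nth T2 r')
    (hst : s r = nth T1 r) : s r' = nth T1 r' := by
  have hs : ∀ c, 1 ≤ c → c ≤ k → s c = nth T1 c ∨ s c = nth T2 c := by
    intro c hc1 hc2; rcases hsv c hc1 hc2 with h | h
    · exact Or.inl h.1
    · exact Or.inr h.1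
  have hv : ∀ c, 1 ≤ c → c ≤ k → v c = nth T1 c ∨ v c = nth T2 c := by
    intro c hc1 hc2; rcases hsv c hc1 hc2 with h | h
    · exact Or.inr h.2
    · exact Or.inl h.2
  have ht : ∀ c, 1 ≤ c → c ≤ k → nth T1 c = nth T1 c ∨ nth T1 c = nth T2 c :=
    fun c _ _ => Or.inl rfl
  have hu : ∀ c, 1 ≤ c → c ≤ k → nth T2 c = nth T1 c ∨ nth T2 c = nth T2 c :=
    fun c _ _ => Or.inr rfl
  have htmono : ∀ a b, 1 ≤ a → a < b → b ≤ k → nth T1 a < nth T1 b :=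
    fun a b ha hab hb' => nth_lt_nth ha hab (hT1c ▸ hb')
  have humono : ∀ a b, 1 ≤ a → a < b → b ≤ k → nth T2 a < nth T2 b :=
    fun a b ha hab hb' => nth_lt_nth ha hab (hT2c ▸ hb')
  rcases le_or_gt (nth T2 r) (nth T1 r) with hor | hor
  · have hMr : nth T1 r = Mrow T1 T2 r := by unfold Mrow; omega
    have hs' := chainM hT1c hT2c s hs hsmono h1 hrr hk hb (hst.trans hMr)
    have ht' := chainM hT1c hT2c (nth T1) ht htmono h1 hrr hk hb hMr
    rw [hs', ht']
  · have hvr : v r = nth T2 r := by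
      rcases hsv r h1 (by omega) with h | h
      · exact h.2
      · exact absurd (hst.symm.trans h.1) hnt
    have hMr : nth T2 r = Mrow T1 T2 r := by unfold Mrow; omega
    have hv' := chainM hT1c hT2c v hv hvmono h1 hrr hk hb (hvr.trans hMr)
    have hu' := chainM hT1c hT2c (nth T2) hu humono h1 hrr hk hb hMr
    have hvu : v r' = nth T2 r' := hv'.trans hu'.symm
    rcases hsv r' (by omega) hk with h | h
    · exact h.1
    · exact absurd (h.2.symm.trans hvu) hnt'

end Chain

section BlockVals
variable {T1 T2 : Finset ℕ} {k : ℕ}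

lemma strictMono_eq_of_image_eq {p q : ℕ} (f g : ℕ → ℕ)
    (hf : ∀ a b, p ≤ a → a < b → b ≤ q → f a < f b)
    (hg : ∀ a b, p ≤ a → a < b → b ≤ q → g a < g b)
    (him : (Icc p q).image f = (Icc p q).image g) :
    ∀ i, p ≤ i → i ≤ q → f i = g i := by
  have key : ∀ (f : ℕ → ℕ), (∀ a b, p ≤ a → a < b → b ≤ q → f a < f b) →
      ∀ i, p ≤ i → i ≤ q →
      (((Icc p q).image f).filter (· ≤ f i)).card = i - p + 1 := by
    intro f hf i hpi hiq
    have h1 : ((Icc p q).image f).filter (· ≤ f i) = (Icc p i).image f := by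
      ext x
      simp only [Finset.mem_filter, Finset.mem_image, Finset.mem_Icc]
      constructor
      · rintro ⟨⟨j, ⟨hj1, hj2⟩, rfl⟩, hle⟩
        refine ⟨j, ⟨hj1, ?_⟩, rfl⟩
        by_contra hji
        exact absurd (hf i j hpi (by omega) hj2) (by omega)
      · rintro ⟨j, ⟨hj1, hj2⟩, rfl⟩
        refine ⟨⟨j, ⟨hj1, by omega⟩, rfl⟩, ?_⟩
        rcases eq_or_lt_of_le hj2 with h | h
        · rw [h]
        · exact le_of_lt (hf j i hj1 h hiq)
    have hinj : ((Icc p i) : Set ℕ).InjOn f := by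
      intro a ha b hb hab
      simp only [Finset.coe_Icc, Set.mem_Icc] at ha hb
      by_contra hne
      rcases lt_or_gt_of_ne hne with h | h
      · exact absurd hab (ne_of_lt (hf a b ha.1 h (by omega)))
      · exact absurd hab.symm (ne_of_lt (hf b a hb.1 h (by omega)))
    rw [h1, Finset.card_image_of_injOn hinj, Nat.card_Icc]
    omega
  intro i hpi hiq
  have hfi : f i ∈ (Icc p q).image g := by
    rw [← him]; exact Finset.mem_image.2 ⟨i, Finset.mem_Icc.2 ⟨hpi, hiq⟩, rfl⟩
  obtain ⟨j, hj, hji⟩ := Finset.mem_image.1 hfi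
  rw [Finset.mem_Icc] at hj
  have c1 := key f hf i hpi hiq
  have c2 := key g hg j hj.1 hj.2
  rw [hji] at c2
  rw [him] at c1
  have hij : i = j := by omega
  rw [← hij] at hji
  exact hji.symm

lemma bid_of_eq (hT1c : T1.card = k) (hT2c : T2.card = k) {e e' : ℕ}
    (h1 : 1 ≤ e) (h2 : e ≤ k) (h1' : 1 ≤ e') (h2' : e' ≤ k)
    (hval : nth T1 e = nth T2 e') : bid T1 T2 e = bid T1 T2 e' := by
  by_contra hne
  rcases lt_or_gt_of_ne hne with h | h
  · have := bid_sep T1 T2 hT1c hT2c h1 h2' h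
    have h3 : nth T1 e ≤ Mrow T1 T2 e := by unfold Mrow; omega
    have h4 : mrow T1 T2 e' ≤ nth T2 e' := by unfold mrow; omega
    omega
  · have := bid_sep T1 T2 hT1c hT2c h1' h2 h
    have h3 : nth T2 e' ≤ Mrow T1 T2 e' := by unfold Mrow; omega
    have h4 : mrow T1 T2 e ≤ nth T1 e := by unfold mrow; omega
    omega

/-- if a row of a block is nontrivial, the block contains an element of `T1 \ T2`. -/
lemma block_active (hT1c : T1.card = k) (hT2c : T2.card = k) {r : ℕ}
    (h1 : 1 ≤ r) (hk : r ≤ k) (hnt : nth T1 r ≠ nth T2 r) :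
    ∃ x ∈ T1 \ T2, 1 ≤ rk T1 x ∧ rk T1 x ≤ k ∧ bid T1 T2 (rk T1 x) = bid T1 T2 r := by
  classical
  by_contra hno
  push_neg at hno
  set b := bid T1 T2 r with hbdef
  set R := (Icc 1 k).filter (fun e => bid T1 T2 e = b) with hRdef
  have hrR : r ∈ R := by
    rw [hRdef, Finset.mem_filter, Finset.mem_Icc]; exact ⟨⟨h1, hk⟩, rfl⟩
  have hRne : R.Nonempty := ⟨r, hrR⟩
  set p := R.min' hRne with hp
  set q := R.max' hRne with hq
  have hmemR : ∀ {e : ℕ}, e ∈ R → 1 ≤ e ∧ e ≤ k ∧ bid T1 T2 e = b := by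
    intro e he
    rw [hRdef, Finset.mem_filter, Finset.mem_Icc] at he
    exact ⟨he.1.1, he.1.2, he.2⟩
  have hpR := hmemR (R.min'_mem hRne)
  have hqR := hmemR (R.max'_mem hRne)
  rw [← hp] at hpR
  rw [← hq] at hqR
  have hRIcc : R = Icc p q := by
    ext i
    rw [Finset.mem_Icc]
    constructor
    · intro hi
      exact ⟨R.min'_le i hi, R.le_max' i hi⟩
    · rintro ⟨hpi, hiq⟩
      have hb1 := bid_mono T1 T2 hpi
      have hb2 := bid_mono T1 T2 hiq
      rw [hRdef, Finset.mem_filter, Finset.mem_Icc]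
      refine ⟨⟨by omega, by omega⟩, by omega⟩
  have hsub : (Icc p q).image (nth T1) ⊆ (Icc p q).image (nth T2) := by
    intro x hx
    obtain ⟨e, he, rfl⟩ := Finset.mem_image.1 hx
    rw [Finset.mem_Icc] at he
    have heR : e ∈ R := by rw [hRIcc, Finset.mem_Icc]; exact he
    obtain ⟨he1, he2, he3⟩ := hmemR heR
    have hmem : nth T1 e ∈ T2 := by
      by_contra hxT2
      have hxE1 : nth T1 e ∈ T1 \ T2 :=
        Finset.mem_sdiff.2 ⟨nth_mem he1 (hT1c ▸ he2), hxT2⟩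
      have hrk : rk T1 (nth T1 e) = e := rk_nth he1 (hT1c ▸ he2)
      have := hno (nth T1 e) hxE1 (by omega) (by omega)
      rw [hrk] at this
      omega
    obtain ⟨e', he1', he2', he3'⟩ := nth_surj hmem
    have hbe : bid T1 T2 e = bid T1 T2 e' :=
      bid_of_eq hT1c hT2c he1 he2 he1' (hT2c ▸ he2') he3'.symm
    have he'R : e' ∈ R := by
      rw [hRdef, Finset.mem_filter, Finset.mem_Icc]
      exact ⟨⟨he1', hT2c ▸ he2'⟩, by omega⟩
    rw [hRIcc, Finset.mem_Icc] at he'R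
    exact Finset.mem_image.2 ⟨e', Finset.mem_Icc.2 he'R, he3'⟩
  have hinj1 : ((Icc p q) : Set ℕ).InjOn (nth T1) := by
    intro a ha b hb' hab
    simp only [Finset.coe_Icc, Set.mem_Icc] at ha hb'
    by_contra hne
    rcases lt_or_gt_of_ne hne with h | h
    · exact absurd hab (ne_of_lt (nth_lt_nth (by omega) h (hT1c ▸ (by omega))))
    · exact absurd hab.symm (ne_of_lt (nth_lt_nth (by omega) h (hT1c ▸ (by omega))))
  have hinj2 : ((Icc p q) : Set ℕ).InjOn (nth T2) := by
    intro a ha b hb' hab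
    simp only [Finset.coe_Icc, Set.mem_Icc] at ha hb'
    by_contra hne
    rcases lt_or_gt_of_ne hne with h | h
    · exact absurd hab (ne_of_lt (nth_lt_nth (by omega) h (hT2c ▸ (by omega))))
    · exact absurd hab.symm (ne_of_lt (nth_lt_nth (by omega) h (hT2c ▸ (by omega))))
  have heq : (Icc p q).image (nth T1) = (Icc p q).image (nth T2) := by
    apply Finset.eq_of_subset_of_card_le hsub
    rw [Finset.card_image_of_injOn hinj1, Finset.card_image_of_injOn hinj2]
  have := strictMono_eq_of_image_eq (nth T1) (nth T2)
    (fun a b ha hab hb' => nth_lt_nth (by omega) hab (hT1c ▸ (by omega)))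
    (fun a b ha hab hb' => nth_lt_nth (by omega) hab (hT2c ▸ (by omega)))
    heq r (by rw [hRIcc, Finset.mem_Icc] at hrR; omega)
    (by rw [hRIcc, Finset.mem_Icc] at hrR; omega)
  exact hnt this

end BlockVals

section Flip
variable {T1 T2 : Finset ℕ} {k : ℕ}

lemma ws_symm {I J : Finset ℕ} (h : WeaklySeparated I J) : WeaklySeparated J I :=
  Or.symm h

lemma no_pattern (hT1c : T1.card = k) (hT2c : T2.card = k) {a b : ℕ}
    (ha : 1 ≤ a) (hab : a < b) (hbk : b ≤ k)
    (hws : WeaklySeparated (posSlice T1 a b) (posSlice T2 a b))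
    (htriv : ∀ c, a < c → c < b → nth T1 c = nth T2 c)
    (hsep : Mrow T1 T2 a < mrow T1 T2 b)
    (hpa : nth T1 a < nth T2 a) (hpb : nth T1 b < nth T2 b) : False := by
  have hM : nth T2 a ≤ Mrow T1 T2 a := by unfold Mrow; omega
  have hm : mrow T1 T2 b ≤ nth T1 b := by unfold mrow; omega
  have ta_in : nth T1 a ∈ posSlice T1 a b :=
    mem_posSlice.2 ⟨a, ha, hT1c ▸ (by omega), le_rfl, by omega, rfl⟩
  have tb_in : nth T1 b ∈ posSlice T1 a b :=
    mem_posSlice.2 ⟨b, by omega, hT1c ▸ hbk, by omega, le_rfl, rfl⟩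
  have ua_in : nth T2 a ∈ posSlice T2 a b :=
    mem_posSlice.2 ⟨a, ha, hT2c ▸ (by omega), le_rfl, by omega, rfl⟩
  have ub_in : nth T2 b ∈ posSlice T2 a b :=
    mem_posSlice.2 ⟨b, by omega, hT2c ▸ hbk, by omega, le_rfl, rfl⟩
  have ta_no : nth T1 a ∉ posSlice T2 a b := by
    intro hmem
    obtain ⟨c, hc1, hc2, hc3, hc4, hc5⟩ := mem_posSlice.1 hmem
    rcases eq_or_lt_of_le hc3 with rfl | hac
    · omega
    · have := nth_lt_nth ha hac hc2
      omega
  have tb_no : nth T1 b ∉ posSlice T2 a b := by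
    intro hmem
    obtain ⟨c, hc1, hc2, hc3, hc4, hc5⟩ := mem_posSlice.1 hmem
    rcases eq_or_lt_of_le hc4 with rfl | hcb
    · omega
    · rcases eq_or_lt_of_le hc3 with rfl | hac
      · omega
      · have h1 := htriv c hac hcb
        have h2 := nth_lt_nth (by omega) hcb (hT1c ▸ hbk)
        omega
  have ua_no : nth T2 a ∉ posSlice T1 a b := by
    intro hmem
    obtain ⟨c, hc1, hc2, hc3, hc4, hc5⟩ := mem_posSlice.1 hmem
    rcases eq_or_lt_of_le hc3 with rfl | hac
    · omega
    · rcases eq_or_lt_of_le hc4 with rfl | hcb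
      · omega
      · have h1 := htriv c hac hcb
        have h2 := nth_lt_nth ha hac (hT2c ▸ (by omega : c ≤ k))
        omega
  have ub_no : nth T2 b ∉ posSlice T1 a b := by
    intro hmem
    obtain ⟨c, hc1, hc2, hc3, hc4, hc5⟩ := mem_posSlice.1 hmem
    rcases eq_or_lt_of_le hc4 with rfl | hcb
    · omega
    · have := nth_lt_nth (by omega : 1 ≤ c) hcb (hT1c ▸ hbk)
      omega
  have htbd : nth T1 b ∈ posSlice T1 a b \ posSlice T2 a b := Finset.mem_sdiff.2 ⟨tb_in, tb_no⟩
  have htad : nth T1 a ∈ posSlice T1 a b \ posSlice T2 a b := Finset.mem_sdiff.2 ⟨ta_in, ta_no⟩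
  have huad : nth T2 a ∈ posSlice T2 a b \ posSlice T1 a b := Finset.mem_sdiff.2 ⟨ua_in, ua_no⟩
  have hubd : nth T2 b ∈ posSlice T2 a b \ posSlice T1 a b := Finset.mem_sdiff.2 ⟨ub_in, ub_no⟩
  rcases hws with ⟨I1, I2, _, huni, h1, h2⟩ | ⟨J1, J2, _, huni, h1, h2⟩
  · have : nth T1 b ∈ I1 ∪ I2 := huni ▸ htbd
    rcases Finset.mem_union.1 this with h | h
    · have := h1 _ h _ huad; omega
    · have := h2 _ hubd _ h; omega
  · have : nth T2 a ∈ J1 ∪ J2 := huni ▸ huad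
    rcases Finset.mem_union.1 this with h | h
    · have := h1 _ h _ htad; omega
    · have := h2 _ htbd _ h; omega

lemma flipOrient (hT1c : T1.card = k) (hT2c : T2.card = k) (hnc : Noncrossing k T1 T2)
    {a b : ℕ} (ha : 1 ≤ a) (hab : a < b) (hbk : b ≤ k)
    (htriv : ∀ c, a < c → c < b → nth T1 c = nth T2 c)
    (hsep : Mrow T1 T2 a < mrow T1 T2 b)
    (hna : nth T1 a ≠ nth T2 a) (hnb : nth T1 b ≠ nth T2 b) :
    (nth T1 a < nth T2 a ↔ nth T2 b < nth T1 b) := by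
  have hws : WeaklySeparated (posSlice T1 a b) (posSlice T2 a b) := by
    rcases hnc a b ha hab hbk with h | h
    · exact h
    · exfalso
      apply h
      ext x
      rw [mem_posSlice, mem_posSlice]
      constructor
      · rintro ⟨c, hc1, hc2, hc3, hc4, rfl⟩
        have hcb : c < b := by omega
        have := htriv c (by omega) hcb
        exact ⟨c, hc1, by omega, hc3, hc4, this.symm⟩
      · rintro ⟨c, hc1, hc2, hc3, hc4, rfl⟩
        have hcb : c < b := by omega
        have := htriv c (by omega) hcb
        exact ⟨c, hc1, by omega, hc3, hc4, this⟩
  have hws' : WeaklySeparated (posSlice T2 a b) (posSlice T1 a b) := ws_symm hws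
  have hp1 : ¬ (nth T1 a < nth T2 a ∧ nth T1 b < nth T2 b) := by
    rintro ⟨h1', h2'⟩
    exact no_pattern hT1c hT2c ha hab hbk hws htriv hsep h1' h2'
  have hp2 : ¬ (nth T2 a < nth T1 a ∧ nth T2 b < nth T1 b) := by
    rintro ⟨h1', h2'⟩
    refine no_pattern hT2c hT1c ha hab hbk hws' ?_ ?_ h1' h2'
    · intro c hc1 hc2; exact (htriv c hc1 hc2).symm
    · rw [← Mrow_comm, ← mrow_comm]; exact hsep
  omega

end Flip

section Core
variable {T1 T2 : Finset ℕ} {k : ℕ}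

lemma core_flip (hT1c : T1.card = k) (hT2c : T2.card = k) (hnc : Noncrossing k T1 T2)
    {β γ : ℕ} (hβγ : β < γ)
    (horderβ : ∀ x ∈ T1 \ T2, bid T1 T2 (rk T1 x) = β →
      ∀ w ∈ T2 \ T1, bid T1 T2 (rk T2 w) = β → x < w)
    (horderγ : ∀ x ∈ T1 \ T2, bid T1 T2 (rk T1 x) = γ →
      ∀ w ∈ T2 \ T1, bid T1 T2 (rk T2 w) = γ → x < w)
    (hneβ : ∃ w ∈ T2 \ T1, bid T1 T2 (rk T2 w) = β)
    (hneγ : ∃ x ∈ T1 \ T2, bid T1 T2 (rk T1 x) = γ)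
    (htriv : ∀ r, 1 ≤ r → r ≤ k → nth T1 r ≠ nth T2 r →
      bid T1 T2 r = β ∨ bid T1 T2 r = γ) : False := by
  classical
  obtain ⟨w0, hw0, hw0b⟩ := hneβ
  obtain ⟨z0, hz0, hz0b⟩ := hneγ
  rw [Finset.mem_sdiff] at hw0 hz0
  obtain ⟨hw0r1, hw0r2, hw0r3⟩ := nth_rk hw0.1
  obtain ⟨hz0r1, hz0r2, hz0r3⟩ := nth_rk hz0.1
  set NTβ := (Icc 1 k).filter (fun r => nth T1 r ≠ nth T2 r ∧ bid T1 T2 r = β) with hNTβ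
  set NTγ := (Icc 1 k).filter (fun r => nth T1 r ≠ nth T2 r ∧ bid T1 T2 r = γ) with hNTγ
  have hmemβ : ∀ {e : ℕ}, e ∈ NTβ ↔ (1 ≤ e ∧ e ≤ k ∧ nth T1 e ≠ nth T2 e ∧ bid T1 T2 e = β) := by
    intro e
    rw [hNTβ, Finset.mem_filter, Finset.mem_Icc]
    tauto
  have hmemγ : ∀ {e : ℕ}, e ∈ NTγ ↔ (1 ≤ e ∧ e ≤ k ∧ nth T1 e ≠ nth T2 e ∧ bid T1 T2 e = γ) := by
    intro e
    rw [hNTγ, Finset.mem_filter, Finset.mem_Icc]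
    tauto
  have hβne : NTβ.Nonempty := by
    refine ⟨rk T2 w0, hmemβ.2 ⟨hw0r1, hT2c ▸ hw0r2, ?_, hw0b⟩⟩
    rw [hw0r3]
    intro h
    exact hw0.2 (h ▸ nth_mem hw0r1 (by omega : rk T2 w0 ≤ T1.card))
  have hγne : NTγ.Nonempty := by
    refine ⟨rk T1 z0, hmemγ.2 ⟨hz0r1, hT1c ▸ hz0r2, ?_, hz0b⟩⟩
    rw [hz0r3]
    intro h
    exact hz0.2 (h ▸ nth_mem hz0r1 (by omega : rk T1 z0 ≤ T2.card))
  set c := NTβ.max' hβne with hc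
  set c' := NTγ.min' hγne with hc'
  have hcP : 1 ≤ c ∧ c ≤ k ∧ nth T1 c ≠ nth T2 c ∧ bid T1 T2 c = β := by
    have := NTβ.max'_mem hβne
    rw [← hc] at this
    exact hmemβ.1 this
  have hcP' : 1 ≤ c' ∧ c' ≤ k ∧ nth T1 c' ≠ nth T2 c' ∧ bid T1 T2 c' = γ := by
    have := NTγ.min'_mem hγne
    rw [← hc'] at this
    exact hmemγ.1 this
  have hcc' : c < c' := by
    by_contra h
    have := bid_mono T1 T2 (by omega : c' ≤ c)
    omega
  have htrivint : ∀ e, c < e → e < c' → nth T1 e = nth T2 e := by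
    intro e he1 he2
    by_contra hne
    rcases htriv e (by omega) (by omega) hne with h | h
    · have : e ∈ NTβ := hmemβ.2 ⟨by omega, by omega, hne, h⟩
      have := NTβ.le_max' e this
      omega
    · have : e ∈ NTγ := hmemγ.2 ⟨by omega, by omega, hne, h⟩
      have := NTγ.min'_le e this
      omega
  have hsep : Mrow T1 T2 c < mrow T1 T2 c' :=
    bid_sep T1 T2 hT1c hT2c hcP.1 hcP'.2.1 (by omega)
  -- orientation at c : nth T1 c < nth T2 c
  have horc : nth T1 c < nth T2 c := by
    by_contra hno
    have huc : nth T2 c < nth T1 c := by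
      rcases lt_or_gt_of_ne hcP.2.2.1 with h | h
      · exact absurd h hno
      · exact h
    by_cases hmem : nth T1 c ∈ T2
    · obtain ⟨he1, he2, he3⟩ := nth_rk hmem
      set e := rk T2 (nth T1 c) with hedef
      have hbe : bid T1 T2 c = bid T1 T2 e :=
        bid_of_eq hT1c hT2c hcP.1 hcP.2.1 he1 (hT2c ▸ he2) he3.symm
      have hec : e ≠ c := by
        intro h
        rw [h] at he3
        exact hcP.2.2.1 he3.symm
      rcases lt_or_gt_of_ne hec with h | h
      · have := nth_lt_nth he1 h (hT2c ▸ hcP.2.1)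
        rw [he3] at this
        omega
      · have hnte : nth T1 e ≠ nth T2 e := by
          have := nth_lt_nth hcP.1 h (hT1c ▸ hT2c ▸ he2)
          rw [he3]
          omega
        have : e ∈ NTβ := hmemβ.2 ⟨he1, hT2c ▸ he2, hnte, by omega⟩
        have := NTβ.le_max' e this
        omega
    · have hE1 : nth T1 c ∈ T1 \ T2 :=
        Finset.mem_sdiff.2 ⟨nth_mem hcP.1 (hT1c ▸ hcP.2.1), hmem⟩
      have hrkc : rk T1 (nth T1 c) = c := rk_nth hcP.1 (hT1c ▸ hcP.2.1)
      have hlt : nth T1 c < w0 := horderβ _ hE1 (by rw [hrkc]; exact hcP.2.2.2) w0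
        (Finset.mem_sdiff.2 hw0) hw0b
      have hrw : rk T2 w0 ∈ NTβ := hmemβ.2 ⟨hw0r1, hT2c ▸ hw0r2, by
        rw [hw0r3]; intro h; exact hw0.2 (h ▸ nth_mem hw0r1 (by omega : rk T2 w0 ≤ T1.card)), hw0b⟩
      have hle : rk T2 w0 ≤ c := NTβ.le_max' _ hrw
      have : w0 ≤ nth T2 c := by
        rw [← hw0r3]
        exact nth_le_nth hw0r1 hle (hT2c ▸ hcP.2.1)
      omega
  -- orientation at c' : nth T1 c' < nth T2 c'
  have horc' : nth T1 c' < nth T2 c' := by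
    by_contra hno
    have huc : nth T2 c' < nth T1 c' := by
      rcases lt_or_gt_of_ne hcP'.2.2.1 with h | h
      · exact absurd h hno
      · exact h
    by_cases hmem : nth T2 c' ∈ T1
    · obtain ⟨he1, he2, he3⟩ := nth_rk hmem
      set e := rk T1 (nth T2 c') with hedef
      have hbe : bid T1 T2 e = bid T1 T2 c' :=
        bid_of_eq hT1c hT2c he1 (hT1c ▸ he2) hcP'.1 hcP'.2.1 he3
      have hec : e ≠ c' := by
        intro h
        rw [h] at he3
        exact hcP'.2.2.1 he3
      rcases lt_or_gt_of_ne hec with h | h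
      · have hnte : nth T1 e ≠ nth T2 e := by
          have := nth_lt_nth he1 h (hT2c ▸ hcP'.2.1)
          rw [he3]
          omega
        have : e ∈ NTγ := hmemγ.2 ⟨he1, hT1c ▸ he2, hnte, by omega⟩
        have := NTγ.min'_le e this
        omega
      · have := nth_lt_nth hcP'.1 h he2
        rw [he3] at this
        omega
    · have hE2 : nth T2 c' ∈ T2 \ T1 :=
        Finset.mem_sdiff.2 ⟨nth_mem hcP'.1 (hT2c ▸ hcP'.2.1), hmem⟩
      have hrkc : rk T2 (nth T2 c') = c' := rk_nth hcP'.1 (hT2c ▸ hcP'.2.1)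
      have hlt : z0 < nth T2 c' := horderγ z0 (Finset.mem_sdiff.2 hz0) hz0b _ hE2
        (by rw [hrkc]; exact hcP'.2.2.2)
      have hrz : rk T1 z0 ∈ NTγ := hmemγ.2 ⟨hz0r1, hT1c ▸ hz0r2, by
        rw [hz0r3]; intro h; exact hz0.2 (h ▸ nth_mem hz0r1 (by omega : rk T1 z0 ≤ T2.card)), hz0b⟩
      have hle : c' ≤ rk T1 z0 := NTγ.min'_le _ hrz
      have : nth T1 c' ≤ z0 := by
        rw [← hz0r3]
        exact nth_le_nth hcP'.1 hle (hT1c ▸ hz0r2)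
      omega
  have := flipOrient hT1c hT2c hnc hcP.1 hcc' hcP'.2.1 htrivint hsep hcP.2.2.1 hcP'.2.2.1
  omega

end Core

lemma nc_symm {k : ℕ} {T1 T2 : Finset ℕ} (h : Noncrossing k T1 T2) : Noncrossing k T2 T1 := by
  intro a b h1 h2 h3
  rcases h a b h1 h2 h3 with h' | h'
  · exact Or.inl (ws_symm h')
  · exact Or.inr (Ne.symm h')

lemma main_nodisj1 (k : ℕ) (T1 T2 S1 S2 : Finset ℕ)
    (hT1c : T1.card = k) (hT2c : T2.card = k) (hS1c : S1.card = k) (hS2c : S2.card = k)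
    (hnc : Noncrossing k T1 T2) (hnws : ¬ WeaklySeparated T1 T2)
    (hunion : ∀ a : ℕ, 1 ≤ a → a ≤ k →
      ({nth S1 a, nth S2 a} : Multiset ℕ) = ({nth T1 a, nth T2 a} : Multiset ℕ)) :
    ¬ Disj1 S1 S2 := by
  classical
  intro hd
  rw [disj1_iff] at hd
  have hnd1 : ¬ Disj1 T1 T2 := fun h => hnws (Or.inl h)
  have hnd2 : ¬ Disj1 T2 T1 := fun h => hnws (Or.inr h)
  obtain ⟨x, hx, y1, hy1, y2, hy2, hxy1, hxy2⟩ := not_disj1 hnd1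
  obtain ⟨y, hy, x1, hx1, x2, hx2, hyx1, hyx2⟩ := not_disj1 hnd2
  have hsv : ∀ c, 1 ≤ c → c ≤ k →
      (nth S1 c = nth T1 c ∧ nth S2 c = nth T2 c) ∨
      (nth S1 c = nth T2 c ∧ nth S2 c = nth T1 c) :=
    fun c h1 h2 => pair_eq (hunion c h1 h2)
  have hsv' : ∀ c, 1 ≤ c → c ≤ k →
      (nth S1 c = nth T2 c ∧ nth S2 c = nth T1 c) ∨
      (nth S1 c = nth T1 c ∧ nth S2 c = nth T2 c) :=
    fun c h1 h2 => (hsv c h1 h2).symm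
  have hs1mono : ∀ a b, 1 ≤ a → a < b → b ≤ k → nth S1 a < nth S1 b :=
    fun a b ha hab hb => nth_lt_nth ha hab (by omega)
  have hs2mono : ∀ a b, 1 ≤ a → a < b → b ≤ k → nth S2 a < nth S2 b :=
    fun a b ha hab hb => nth_lt_nth ha hab (by omega)
  -- nontrivial-row data for difference elements
  have hE1nt : ∀ z ∈ T1 \ T2, 1 ≤ rk T1 z ∧ rk T1 z ≤ k ∧ nth T1 (rk T1 z) = z ∧
      nth T1 (rk T1 z) ≠ nth T2 (rk T1 z) := by
    intro z hz
    rw [Finset.mem_sdiff] at hz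
    obtain ⟨h1, h2, h3⟩ := nth_rk hz.1
    refine ⟨h1, by omega, h3, ?_⟩
    rw [h3]
    intro h
    exact hz.2 (h ▸ nth_mem h1 (by omega : rk T1 z ≤ T2.card))
  have hE2nt : ∀ y' ∈ T2 \ T1, 1 ≤ rk T2 y' ∧ rk T2 y' ≤ k ∧ nth T2 (rk T2 y') = y' ∧
      nth T1 (rk T2 y') ≠ nth T2 (rk T2 y') := by
    intro z hz
    rw [Finset.mem_sdiff] at hz
    obtain ⟨h1, h2, h3⟩ := nth_rk hz.1
    refine ⟨h1, by omega, h3, ?_⟩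
    rw [h3]
    intro h
    exact hz.2 (h.symm ▸ nth_mem h1 (by omega : rk T2 z ≤ T1.card))
  -- membership in S1 / S2 via rows
  have tinj : ∀ e c, 1 ≤ e → e ≤ k → 1 ≤ c → c ≤ k → nth T1 e = nth T1 c → e = c := by
    intro e c h1 h2 h3 h4 h5
    by_contra hne
    rcases lt_or_gt_of_ne hne with h | h
    · exact absurd h5 (ne_of_lt (nth_lt_nth h1 h (by omega)))
    · exact absurd h5.symm (ne_of_lt (nth_lt_nth h3 h (by omega)))
  have uinj : ∀ e c, 1 ≤ e → e ≤ k → 1 ≤ c → c ≤ k → nth T2 e = nth T2 c → e = c := by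
    intro e c h1 h2 h3 h4 h5
    by_contra hne
    rcases lt_or_gt_of_ne hne with h | h
    · exact absurd h5 (ne_of_lt (nth_lt_nth h1 h (by omega)))
    · exact absurd h5.symm (ne_of_lt (nth_lt_nth h3 h (by omega)))
  have hS1mem1 : ∀ z, z ∉ T2 → ∀ c, 1 ≤ c → c ≤ k → nth T1 c = z →
      (z ∈ S1 ↔ nth S1 c = z) := by
    intro z hz c h1 h2 h3
    constructor
    · intro hzS
      obtain ⟨e, he1, he2, he3⟩ := nth_surj hzS
      have hek : e ≤ k := by omega
      rcases hsv e he1 hek with ⟨ha, _⟩ | ⟨ha, _⟩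
      · have : nth T1 e = nth T1 c := by rw [← ha, he3, h3]
        have := tinj e c he1 hek h1 h2 this
        rw [← this, he3]
      · exact absurd (by rw [← ha, he3] : nth T2 e = z)
          (fun h => hz (h ▸ nth_mem he1 (by omega : e ≤ T2.card)))
    · intro h
      exact h ▸ nth_mem h1 (by omega : c ≤ S1.card)
  have hS2mem1 : ∀ z, z ∉ T2 → ∀ c, 1 ≤ c → c ≤ k → nth T1 c = z →
      (z ∈ S2 ↔ nth S2 c = z) := by
    intro z hz c h1 h2 h3
    constructor
    · intro hzS
      obtain ⟨e, he1, he2, he3⟩ := nth_surj hzS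
      have hek : e ≤ k := by omega
      rcases hsv e he1 hek with ⟨_, hb⟩ | ⟨_, hb⟩
      · exact absurd (by rw [← hb, he3] : nth T2 e = z)
          (fun h => hz (h ▸ nth_mem he1 (by omega : e ≤ T2.card)))
      · have : nth T1 e = nth T1 c := by rw [← hb, he3, h3]
        have := tinj e c he1 hek h1 h2 this
        rw [← this, he3]
    · intro h
      exact h ▸ nth_mem h1 (by omega : c ≤ S2.card)
  have hS1mem2 : ∀ z, z ∉ T1 → ∀ c, 1 ≤ c → c ≤ k → nth T2 c = z →
      (z ∈ S1 ↔ nth S1 c = z) := by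
    intro z hz c h1 h2 h3
    constructor
    · intro hzS
      obtain ⟨e, he1, he2, he3⟩ := nth_surj hzS
      have hek : e ≤ k := by omega
      rcases hsv e he1 hek with ⟨ha, _⟩ | ⟨ha, _⟩
      · exact absurd (by rw [← ha, he3] : nth T1 e = z)
          (fun h => hz (h ▸ nth_mem he1 (by omega : e ≤ T1.card)))
      · have : nth T2 e = nth T2 c := by rw [← ha, he3, h3]
        have := uinj e c he1 hek h1 h2 this
        rw [← this, he3]
    · intro h
      exact h ▸ nth_mem h1 (by omega : c ≤ S1.card)
  have hS2mem2 : ∀ z, z ∉ T1 → ∀ c, 1 ≤ c → c ≤ k → nth T2 c = z →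
      (z ∈ S2 ↔ nth S2 c = z) := by
    intro z hz c h1 h2 h3
    constructor
    · intro hzS
      obtain ⟨e, he1, he2, he3⟩ := nth_surj hzS
      have hek : e ≤ k := by omega
      rcases hsv e he1 hek with ⟨_, hb⟩ | ⟨_, hb⟩
      · have : nth T2 e = nth T2 c := by rw [← hb, he3, h3]
        have := uinj e c he1 hek h1 h2 this
        rw [← this, he3]
      · exact absurd (by rw [← hb, he3] : nth T1 e = z)
          (fun h => hz (h ▸ nth_mem he1 (by omega : e ≤ T1.card)))
    · intro h
      exact h ▸ nth_mem h1 (by omega : c ≤ S2.card)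
  -- the side of S that a difference element lands on, read off from row choices
  have PE1 : ∀ z ∈ T1 \ T2,
      (z ∈ S1 \ S2 ↔ nth S1 (rk T1 z) = nth T1 (rk T1 z)) ∧
      (z ∈ S2 \ S1 ↔ ¬ nth S1 (rk T1 z) = nth T1 (rk T1 z)) := by
    intro z hz
    obtain ⟨h1, h2, h3, h4⟩ := hE1nt z hz
    rw [Finset.mem_sdiff] at hz
    have hzT2 : nth T2 (rk T1 z) ≠ z := fun h =>
      hz.2 (h ▸ nth_mem h1 (by omega : rk T1 z ≤ T2.card))
    have hm1 := hS1mem1 z hz.2 _ h1 h2 h3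
    have hm2 := hS2mem1 z hz.2 _ h1 h2 h3
    rw [Finset.mem_sdiff, Finset.mem_sdiff, hm1, hm2]
    rcases hsv _ h1 h2 with ⟨ha, hb⟩ | ⟨ha, hb⟩
    · constructor
      · exact iff_of_true ⟨ha.trans h3, fun hv => hzT2 (hb.symm.trans hv)⟩ ha
      · refine iff_of_false ?_ (not_not_intro ha)
        rintro ⟨hv, -⟩
        exact hzT2 (hb.symm.trans hv)
    · constructor
      · refine iff_of_false ?_ (fun h => h4 (h.symm.trans ha))
        rintro ⟨hs, -⟩
        exact hzT2 (ha.symm.trans hs)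
      · exact iff_of_true ⟨hb.trans h3, fun hs => hzT2 (ha.symm.trans hs)⟩
          (fun h => h4 (h.symm.trans ha))
  have PE2 : ∀ z ∈ T2 \ T1,
      (z ∈ S2 \ S1 ↔ nth S1 (rk T2 z) = nth T1 (rk T2 z)) ∧
      (z ∈ S1 \ S2 ↔ ¬ nth S1 (rk T2 z) = nth T1 (rk T2 z)) := by
    intro z hz
    obtain ⟨h1, h2, h3, h4⟩ := hE2nt z hz
    rw [Finset.mem_sdiff] at hz
    have hzT1 : nth T1 (rk T2 z) ≠ z := fun h =>
      hz.2 (h ▸ nth_mem h1 (by omega : rk T2 z ≤ T1.card))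
    have hm1 := hS1mem2 z hz.2 _ h1 h2 h3
    have hm2 := hS2mem2 z hz.2 _ h1 h2 h3
    rw [Finset.mem_sdiff, Finset.mem_sdiff, hm1, hm2]
    rcases hsv _ h1 h2 with ⟨ha, hb⟩ | ⟨ha, hb⟩
    · constructor
      · exact iff_of_true ⟨hb.trans h3, fun hs => hzT1 (ha.symm.trans hs)⟩ ha
      · refine iff_of_false ?_ (not_not_intro ha)
        rintro ⟨hs, -⟩
        exact hzT1 (ha.symm.trans hs)
    · constructor
      · refine iff_of_false ?_ (fun h => h4 (h.symm.trans ha))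
        rintro ⟨hv, -⟩
        exact hzT1 (hb.symm.trans hv)
      · exact iff_of_true ⟨ha.trans h3, fun hv => hzT1 (hb.symm.trans hv)⟩
          (fun h => h4 (h.symm.trans ha))
  -- sigma alignment across rows in the same block
  have alignσ : ∀ r r', 1 ≤ r → r ≤ k → 1 ≤ r' → r' ≤ k →
      bid T1 T2 r = bid T1 T2 r' → nth T1 r ≠ nth T2 r → nth T1 r' ≠ nth T2 r' →
      (nth S1 r = nth T1 r ↔ nth S1 r' = nth T1 r') := by
    have dir : ∀ r r', 1 ≤ r → r' ≤ k → r ≤ r' →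
        bid T1 T2 r = bid T1 T2 r' → nth T1 r ≠ nth T2 r → nth T1 r' ≠ nth T2 r' →
        (nth S1 r = nth T1 r → nth S1 r' = nth T1 r') := by
      intro r r' h1 h4 h5 h6 h7 h8 h9
      exact aligned_dir hT1c hT2c (nth S1) (nth S2) hsv hs1mono hs2mono h1 h5 h4 h6 h7 h8 h9
    have dir2 : ∀ r r', 1 ≤ r → r' ≤ k → r ≤ r' →
        bid T1 T2 r = bid T1 T2 r' → nth T1 r ≠ nth T2 r → nth T1 r' ≠ nth T2 r' →
        (nth S1 r = nth T2 r → nth S1 r' = nth T2 r') := by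
      intro r r' h1 h4 h5 h6 h7 h8 h9
      have h6' : bid T2 T1 r = bid T2 T1 r' :=
        (bid_comm T1 T2 r).symm.trans (h6.trans (bid_comm T1 T2 r'))
      exact aligned_dir hT2c hT1c (nth S1) (nth S2) hsv' hs1mono hs2mono h1 h5 h4 h6'
        (Ne.symm h7) (Ne.symm h8) h9
    intro r r' h1 h2 h3 h4 h5 h6 h7
    have hor : ∀ e, 1 ≤ e → e ≤ k → nth S1 e = nth T1 e ∨ nth S1 e = nth T2 e := by
      intro e he1 he2
      rcases hsv e he1 he2 with ⟨ha, _⟩ | ⟨ha, _⟩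
      · exact Or.inl ha
      · exact Or.inr ha
    rcases le_total r r' with h | h
    · constructor
      · exact dir r r' h1 h4 h h5 h6 h7
      · intro hres
        by_contra hns
        have hsu : nth S1 r = nth T2 r := by
          rcases hor r h1 h2 with h' | h'
          · exact absurd h' hns
          · exact h'
        have := dir2 r r' h1 h4 h h5 h6 h7 hsu
        rw [hres] at this
        exact h7 this
    · constructor
      · intro hres
        by_contra hns
        have hsu : nth S1 r' = nth T2 r' := by
          rcases hor r' h3 h4 with h' | h'
          · exact absurd h' hns
          · exact h'
        have := dir2 r' r h3 h2 h h5.symm h7 h6 hsu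
        rw [hres] at this
        exact h6 this
      · exact dir r' r h3 h2 h h5.symm h7 h6
  -- block id of a difference element
  set bidOf : ℕ → ℕ := fun z =>
    if z ∈ T1 \ T2 then bid T1 T2 (rk T1 z) else bid T1 T2 (rk T2 z) with hbidOf
  have hbidOf1 : ∀ z ∈ T1 \ T2, bidOf z = bid T1 T2 (rk T1 z) := by
    intro z hz
    rw [hbidOf]
    simp only [hz, if_pos]
  have hbidOf2 : ∀ z ∈ T2 \ T1, bidOf z = bid T1 T2 (rk T2 z) := by
    intro z hz
    rw [Finset.mem_sdiff] at hz
    have : z ∉ T1 \ T2 := fun h => hz.2 (Finset.mem_sdiff.1 h).1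
    rw [hbidOf]
    simp only [this, if_neg, if_false]
  -- value order follows block order
  have hword : ∀ z ∈ T1 \ T2 ∪ (T2 \ T1), ∀ z' ∈ T1 \ T2 ∪ (T2 \ T1),
      bidOf z < bidOf z' → z < z' := by
    have hrepr : ∀ z ∈ T1 \ T2 ∪ (T2 \ T1), ∃ r, 1 ≤ r ∧ r ≤ k ∧
        bidOf z = bid T1 T2 r ∧ mrow T1 T2 r ≤ z ∧ z ≤ Mrow T1 T2 r := by
      intro z hz
      rcases Finset.mem_union.1 hz with hz1 | hz1
      · obtain ⟨h1, h2, h3, h4⟩ := hE1nt z hz1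
        exact ⟨rk T1 z, h1, h2, hbidOf1 z hz1, by unfold mrow; omega, by unfold Mrow; omega⟩
      · obtain ⟨h1, h2, h3, h4⟩ := hE2nt z hz1
        exact ⟨rk T2 z, h1, h2, hbidOf2 z hz1, by unfold mrow; omega, by unfold Mrow; omega⟩
    intro z hz z' hz' hbb
    obtain ⟨r, hr1, hr2, hr3, hr4, hr5⟩ := hrepr z hz
    obtain ⟨r', hr1', hr2', hr3', hr4', hr5'⟩ := hrepr z' hz'
    have := bid_sep T1 T2 hT1c hT2c hr1 hr2' (by omega)
    omega
  have straddle : ∀ ζ ∈ S1 \ S2, ∀ w1 ∈ S2 \ S1, ∀ w2 ∈ S2 \ S1,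
      w1 < ζ → ζ < w2 → False := by
    intro ζ hζ w1 hw1 w2 hw2 hlt1 hlt2
    rcases hd ζ hζ with h | h
    · exact absurd (h w1 hw1) (by omega)
    · exact absurd (h w2 hw2) (by omega)
  have hE1not : ∀ z ∈ T1 \ T2, (z ∈ S2 \ S1 ↔ ¬ z ∈ S1 \ S2) := by
    intro z hz
    rw [(PE1 z hz).1, (PE1 z hz).2]
  have hE2not : ∀ z ∈ T2 \ T1, (z ∈ S1 \ S2 ↔ ¬ z ∈ S2 \ S1) := by
    intro z hz
    rw [(PE2 z hz).1, (PE2 z hz).2]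
  have alignE11 : ∀ z ∈ T1 \ T2, ∀ z' ∈ T1 \ T2, bidOf z = bidOf z' →
      (z ∈ S1 \ S2 ↔ z' ∈ S1 \ S2) := by
    intro z hz z' hz' hb
    obtain ⟨h1, h2, h3, h4⟩ := hE1nt z hz
    obtain ⟨h1', h2', h3', h4'⟩ := hE1nt z' hz'
    rw [hbidOf1 z hz, hbidOf1 z' hz'] at hb
    rw [(PE1 z hz).1, (PE1 z' hz').1]
    exact alignσ _ _ h1 h2 h1' h2' hb h4 h4'
  have alignE12 : ∀ z ∈ T1 \ T2, ∀ y' ∈ T2 \ T1, bidOf z = bidOf y' →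
      (z ∈ S1 \ S2 ↔ y' ∈ S2 \ S1) := by
    intro z hz y' hy' hb
    obtain ⟨h1, h2, h3, h4⟩ := hE1nt z hz
    obtain ⟨h1', h2', h3', h4'⟩ := hE2nt y' hy'
    rw [hbidOf1 z hz, hbidOf2 y' hy'] at hb
    rw [(PE1 z hz).1, (PE2 y' hy').1]
    exact alignσ _ _ h1 h2 h1' h2' hb h4 h4'
  -- every block containing a difference element contains difference elements of both kinds
  have hblk : ∀ z ∈ T1 \ T2 ∪ (T2 \ T1), ∃ xb ∈ T1 \ T2, ∃ yb ∈ T2 \ T1,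
      bidOf xb = bidOf z ∧ bidOf yb = bidOf z := by
    intro z hz
    have hrow : ∃ r, 1 ≤ r ∧ r ≤ k ∧ nth T1 r ≠ nth T2 r ∧ bid T1 T2 r = bidOf z := by
      rcases Finset.mem_union.1 hz with hz1 | hz1
      · obtain ⟨h1, h2, h3, h4⟩ := hE1nt z hz1
        exact ⟨rk T1 z, h1, h2, h4, (hbidOf1 z hz1).symm⟩
      · obtain ⟨h1, h2, h3, h4⟩ := hE2nt z hz1
        exact ⟨rk T2 z, h1, h2, h4, (hbidOf2 z hz1).symm⟩
    obtain ⟨r, hr1, hr2, hr3, hr4⟩ := hrow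
    obtain ⟨xb, hxb, _, _, hxb3⟩ := block_active hT1c hT2c hr1 hr2 hr3
    obtain ⟨yb, hyb, _, _, hyb3⟩ := block_active hT2c hT1c hr1 hr2 (Ne.symm hr3)
    refine ⟨xb, hxb, yb, hyb, ?_, ?_⟩
    · rw [hbidOf1 xb hxb, hxb3, hr4]
    · rw [hbidOf2 yb hyb]
      have := (bid_comm T1 T2 (rk T2 yb)).trans (hyb3.trans (bid_comm T2 T1 r))
      rw [this, hr4]
  have hD1blk : ∀ z ∈ T1 \ T2 ∪ (T2 \ T1), ∃ ζ, ζ ∈ S1 \ S2 ∧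
      ζ ∈ T1 \ T2 ∪ (T2 \ T1) ∧ bidOf ζ = bidOf z := by
    intro z hz
    obtain ⟨xb, hxb, yb, hyb, hb1, hb2⟩ := hblk z hz
    by_cases hP : xb ∈ S1 \ S2
    · exact ⟨xb, hP, Finset.mem_union_left _ hxb, hb1⟩
    · have := (alignE12 xb hxb yb hyb (hb1.trans hb2.symm)).not.1 hP
      have := (hE2not yb hyb).2 this
      exact ⟨yb, this, Finset.mem_union_right _ hyb, hb2⟩
  have hD2blk : ∀ z ∈ T1 \ T2 ∪ (T2 \ T1), ∃ w, w ∈ S2 \ S1 ∧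
      w ∈ T1 \ T2 ∪ (T2 \ T1) ∧ bidOf w = bidOf z := by
    intro z hz
    obtain ⟨xb, hxb, yb, hyb, hb1, hb2⟩ := hblk z hz
    by_cases hP : xb ∈ S1 \ S2
    · have := (alignE12 xb hxb yb hyb (hb1.trans hb2.symm)).1 hP
      exact ⟨yb, this, Finset.mem_union_right _ hyb, hb2⟩
    · have := (hE1not xb hxb).2 hP
      exact ⟨xb, this, Finset.mem_union_left _ hxb, hb1⟩
  -- there are at most two blocks containing difference elements
  have C3 : ∀ z1 ∈ T1 \ T2 ∪ (T2 \ T1), ∀ z2 ∈ T1 \ T2 ∪ (T2 \ T1),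
      ∀ z3 ∈ T1 \ T2 ∪ (T2 \ T1), bidOf z1 < bidOf z2 → bidOf z2 < bidOf z3 → False := by
    intro z1 hz1 z2 hz2 z3 hz3 hb1 hb2
    obtain ⟨ζ, hζ1, hζ2, hζ3⟩ := hD1blk z2 hz2
    obtain ⟨w1, hw11, hw12, hw13⟩ := hD2blk z1 hz1
    obtain ⟨w3, hw31, hw32, hw33⟩ := hD2blk z3 hz3
    exact straddle ζ hζ1 w1 hw11 w3 hw31 (hword w1 hw12 ζ hζ2 (by omega))
      (hword ζ hζ2 w3 hw32 (by omega))
  set U := T1 \ T2 ∪ (T2 \ T1) with hU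
  have hUne : U.Nonempty := ⟨x, Finset.mem_union_left _ hx⟩
  set A := U.image bidOf with hA
  have hAne : A.Nonempty := hUne.image _
  set β := A.min' hAne with hβ
  set γ := A.max' hAne with hγ
  have hβγle : β ≤ γ := A.min'_le _ (A.max'_mem hAne)
  have hA2 : ∀ z ∈ U, bidOf z = β ∨ bidOf z = γ := by
    intro z hz
    have hmem : bidOf z ∈ A := Finset.mem_image_of_mem _ hz
    have h1 : β ≤ bidOf z := A.min'_le _ hmem
    have h2 : bidOf z ≤ γ := A.le_max' _ hmem
    by_contra hcon
    push_neg at hcon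
    obtain ⟨zb, hzbU, hzb⟩ := Finset.mem_image.1 (A.min'_mem hAne)
    obtain ⟨zg, hzgU, hzg⟩ := Finset.mem_image.1 (A.max'_mem hAne)
    refine C3 zb hzbU z hz zg hzgU ?_ ?_
    · rw [hzb]; omega
    · rw [hzg]; omega
  obtain ⟨zβ, hzβU, hzβ⟩ := Finset.mem_image.1 (A.min'_mem hAne)
  obtain ⟨zγ, hzγU, hzγ⟩ := Finset.mem_image.1 (A.max'_mem hAne)
  obtain ⟨xβ, hxβ, yβ, hyβ, hxβb0, hyβb0⟩ := hblk zβ hzβU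
  obtain ⟨xγ, hxγ, yγ, hyγ, hxγb0, hyγb0⟩ := hblk zγ hzγU
  have hxβb : bidOf xβ = β := hxβb0.trans hzβ
  have hyβb : bidOf yβ = β := hyβb0.trans hzβ
  have hxγb : bidOf xγ = γ := hxγb0.trans hzγ
  have hyγb : bidOf yγ = γ := hyγb0.trans hzγ
  have hxβU : xβ ∈ U := Finset.mem_union_left _ hxβ
  have hyβU : yβ ∈ U := Finset.mem_union_right _ hyβ
  have hxγU : xγ ∈ U := Finset.mem_union_left _ hxγ
  have hyγU : yγ ∈ U := Finset.mem_union_right _ hyγ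
  by_cases hPβ : xβ ∈ S1 \ S2 <;> by_cases hPγ : xγ ∈ S1 \ S2
  · -- both blocks: S1-side is the T1-side
    have hallE1 : ∀ z ∈ T1 \ T2, z ∈ S1 \ S2 := by
      intro z hz
      rcases hA2 z (Finset.mem_union_left _ hz) with h | h
      · exact (alignE11 xβ hxβ z hz (by rw [hxβb, h])).1 hPβ
      · exact (alignE11 xγ hxγ z hz (by rw [hxγb, h])).1 hPγ
    have hallE2 : ∀ z ∈ T2 \ T1, z ∈ S2 \ S1 := by
      intro z hz
      rcases hA2 z (Finset.mem_union_right _ hz) with h | h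
      · exact (alignE12 xβ hxβ z hz (by rw [hxβb, h])).1 hPβ
      · exact (alignE12 xγ hxγ z hz (by rw [hxγb, h])).1 hPγ
    exact straddle x (hallE1 x hx) y1 (hallE2 y1 hy1) y2 (hallE2 y2 hy2) hxy1 hxy2
  · -- mixed: T1-side below on both blocks; contradiction via noncrossing
    have hne : β ≠ γ := by
      intro h
      exact hPγ ((alignE11 xβ hxβ xγ hxγ (by rw [hxβb, hxγb, h])).1 hPβ)
    have hβγ : β < γ := lt_of_le_of_ne hβγle hne
    have hxγD2 : xγ ∈ S2 \ S1 := (hE1not xγ hxγ).2 hPγ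
    have hyβD2 : yβ ∈ S2 \ S1 := (alignE12 xβ hxβ yβ hyβ (by rw [hxβb, hyβb])).1 hPβ
    have hyγD1 : yγ ∈ S1 \ S2 :=
      (hE2not yγ hyγ).2 ((alignE12 xγ hxγ yγ hyγ (by rw [hxγb, hyγb])).not.1 hPγ)
    have horderβ : ∀ z ∈ T1 \ T2, bid T1 T2 (rk T1 z) = β →
        ∀ w ∈ T2 \ T1, bid T1 T2 (rk T2 w) = β → z < w := by
      intro z hz hzb w hw hwb
      have hzb' : bidOf z = β := by rw [hbidOf1 z hz, hzb]
      have hwb' : bidOf w = β := by rw [hbidOf2 w hw, hwb]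
      have hzD1 : z ∈ S1 \ S2 := (alignE11 xβ hxβ z hz (by rw [hxβb, hzb'])).1 hPβ
      have hwD2 : w ∈ S2 \ S1 := (alignE12 xβ hxβ w hw (by rw [hxβb, hwb'])).1 hPβ
      have hzxγ : z < xγ :=
        hword z (Finset.mem_union_left _ hz) xγ hxγU (by rw [hzb', hxγb]; omega)
      rcases hd z hzD1 with h | h
      · exact h w hwD2
      · exact absurd (h xγ hxγD2) (by omega)
    have horderγ : ∀ z ∈ T1 \ T2, bid T1 T2 (rk T1 z) = γ →
        ∀ w ∈ T2 \ T1, bid T1 T2 (rk T2 w) = γ → z < w := by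
      intro z hz hzb w hw hwb
      have hzb' : bidOf z = γ := by rw [hbidOf1 z hz, hzb]
      have hwb' : bidOf w = γ := by rw [hbidOf2 w hw, hwb]
      have hzD2 : z ∈ S2 \ S1 :=
        (hE1not z hz).2 ((alignE11 xγ hxγ z hz (by rw [hxγb, hzb'])).not.1 hPγ)
      have hwD1 : w ∈ S1 \ S2 :=
        (hE2not w hw).2 ((alignE12 xγ hxγ w hw (by rw [hxγb, hwb'])).not.1 hPγ)
      have hyβw : yβ < w :=
        hword yβ hyβU w (Finset.mem_union_right _ hw) (by rw [hyβb, hwb']; omega)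
      rcases hd w hwD1 with h | h
      · exact absurd (h yβ hyβD2) (by omega)
      · exact h z hzD2
    have htriv : ∀ r, 1 ≤ r → r ≤ k → nth T1 r ≠ nth T2 r →
        bid T1 T2 r = β ∨ bid T1 T2 r = γ := by
      intro r h1 h2 h3
      obtain ⟨x', hx', _, _, hx'3⟩ := block_active hT1c hT2c h1 h2 h3
      have := hA2 x' (Finset.mem_union_left _ hx')
      rw [hbidOf1 x' hx', hx'3] at this
      exact this
    exact core_flip hT1c hT2c hnc hβγ horderβ horderγ
      ⟨yβ, hyβ, by rw [← hbidOf2 yβ hyβ]; exact hyβb⟩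
      ⟨xγ, hxγ, by rw [← hbidOf1 xγ hxγ]; exact hxγb⟩ htriv
  · -- mixed the other way: apply the same argument with T1 and T2 exchanged
    have hne : β ≠ γ := by
      intro h
      exact hPβ ((alignE11 xγ hxγ xβ hxβ (by rw [hxβb, hxγb, h])).1 hPγ)
    have hβγ : β < γ := lt_of_le_of_ne hβγle hne
    have hxβD2 : xβ ∈ S2 \ S1 := (hE1not xβ hxβ).2 hPβ
    have hyγD2 : yγ ∈ S2 \ S1 := (alignE12 xγ hxγ yγ hyγ (by rw [hxγb, hyγb])).1 hPγ
    have horderβ' : ∀ z ∈ T2 \ T1, bid T2 T1 (rk T2 z) = β →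
        ∀ w ∈ T1 \ T2, bid T2 T1 (rk T1 w) = β → z < w := by
      intro z hz hzb w hw hwb
      have hzb' : bidOf z = β := by
        rw [hbidOf2 z hz, bid_comm, hzb]
      have hwb' : bidOf w = β := by
        rw [hbidOf1 w hw, bid_comm, hwb]
      have hzD1 : z ∈ S1 \ S2 :=
        (hE2not z hz).2 ((alignE12 xβ hxβ z hz (by rw [hxβb, hzb'])).not.1 hPβ)
      have hwD2 : w ∈ S2 \ S1 :=
        (hE1not w hw).2 ((alignE11 xβ hxβ w hw (by rw [hxβb, hwb'])).not.1 hPβ)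
      have hzyγ : z < yγ :=
        hword z (Finset.mem_union_right _ hz) yγ hyγU (by rw [hzb', hyγb]; omega)
      rcases hd z hzD1 with h | h
      · exact h w hwD2
      · exact absurd (h yγ hyγD2) (by omega)
    have horderγ' : ∀ z ∈ T2 \ T1, bid T2 T1 (rk T2 z) = γ →
        ∀ w ∈ T1 \ T2, bid T2 T1 (rk T1 w) = γ → z < w := by
      intro z hz hzb w hw hwb
      have hzb' : bidOf z = γ := by
        rw [hbidOf2 z hz, bid_comm, hzb]
      have hwb' : bidOf w = γ := by
        rw [hbidOf1 w hw, bid_comm, hwb]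
      have hzD2 : z ∈ S2 \ S1 := (alignE12 xγ hxγ z hz (by rw [hxγb, hzb'])).1 hPγ
      have hwD1 : w ∈ S1 \ S2 := (alignE11 xγ hxγ w hw (by rw [hxγb, hwb'])).1 hPγ
      have hxβw : xβ < w :=
        hword xβ hxβU w (Finset.mem_union_left _ hw) (by rw [hxβb, hwb']; omega)
      rcases hd w hwD1 with h | h
      · exact absurd (h xβ hxβD2) (by omega)
      · exact h z hzD2
    have htriv' : ∀ r, 1 ≤ r → r ≤ k → nth T2 r ≠ nth T1 r →
        bid T2 T1 r = β ∨ bid T2 T1 r = γ := by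
      intro r h1 h2 h3
      obtain ⟨x', hx', _, _, hx'3⟩ := block_active hT1c hT2c h1 h2 (Ne.symm h3)
      have := hA2 x' (Finset.mem_union_left _ hx')
      rw [hbidOf1 x' hx', hx'3] at this
      rw [bid_comm]
      exact this
    exact core_flip hT2c hT1c (nc_symm hnc) hβγ horderβ' horderγ'
      ⟨xβ, hxβ, by rw [← bid_comm, ← hbidOf1 xβ hxβ]; exact hxβb⟩
      ⟨yγ, hyγ, by rw [← bid_comm, ← hbidOf2 yγ hyγ]; exact hyγb⟩ htriv'
  · -- both blocks: S1-side is the T2-side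
    have hallE1 : ∀ z ∈ T1 \ T2, z ∈ S2 \ S1 := by
      intro z hz
      rcases hA2 z (Finset.mem_union_left _ hz) with h | h
      · exact (hE1not z hz).2 ((alignE11 xβ hxβ z hz (by rw [hxβb, h])).not.1 hPβ)
      · exact (hE1not z hz).2 ((alignE11 xγ hxγ z hz (by rw [hxγb, h])).not.1 hPγ)
    have hallE2 : ∀ z ∈ T2 \ T1, z ∈ S1 \ S2 := by
      intro z hz
      rcases hA2 z (Finset.mem_union_right _ hz) with h | h
      · exact (hE2not z hz).2 ((alignE12 xβ hxβ z hz (by rw [hxβb, h])).not.1 hPβ)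
      · exact (hE2not z hz).2 ((alignE12 xγ hxγ z hz (by rw [hxγb, h])).not.1 hPγ)
    exact straddle y (hallE2 y hy) x1 (hallE1 x1 hx1) x2 (hallE1 x2 hx2) hyx1 hyx2


/-- If `T1, T2` are noncrossing and not weakly separated, then any pair `S1, S2` with the
same row-wise multiset union is not weakly separated. -/
theorem not_weakly_separated_of_same_union
    (n k : ℕ) (T1 T2 S1 S2 : Finset ℕ)
    (hT1 : T1 ⊆ Finset.Icc 1 n) (hT2 : T2 ⊆ Finset.Icc 1 n)
    (hS1 : S1 ⊆ Finset.Icc 1 n) (hS2 : S2 ⊆ Finset.Icc 1 n)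
    (hT1c : T1.card = k) (hT2c : T2.card = k) (hS1c : S1.card = k) (hS2c : S2.card = k)
    (hnc : Noncrossing k T1 T2) (hnws : ¬ WeaklySeparated T1 T2)
    (hunion : ∀ a : ℕ, 1 ≤ a → a ≤ k →
      ({nth S1 a, nth S2 a} : Multiset ℕ) = ({nth T1 a, nth T2 a} : Multiset ℕ)) :
    ¬ WeaklySeparated S1 S2 := by
  intro hws
  rcases (hws : Disj1 S1 S2 ∨ Disj1 S2 S1) with h | h
  · exact main_nodisj1 k T1 T2 S1 S2 hT1c hT2c hS1c hS2c hnc hnws hunion h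
  · refine main_nodisj1 k T1 T2 S2 S1 hT1c hT2c hS2c hS1c hnc hnws ?_ h
    intro a h1 h2
    rw [← hunion a h1 h2]
    exact Multiset.pair_comm _ _
end
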